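/- arXiv:2006.13470 — 3 statements merged into one kernel-verified Lean document; each statement's English description precedes it below -/
import Mathlib

section
/- Let λ₊ and λ₋ be two bounded measured geodesic laminations on ℍ². Then there exists a constant C > 0 such that for every 4-tuple of pairwise distinct points a, b, c, d ∈ ∂∞ℍ² for which the geodesics g(a,b) and g(c,d) are disjoint and the geodesics g(a,c) and g(b,d) are disjoint, one has min{ λ₊(I_{ab} × I_{cd}) + λ₋(I_{ab} × I_{cd}), λ₊(I_{ac} × I_{bd}) + λ₋(I_{ac} × I_{bd}) } ≤ C, where for such an unlinked configuration I_{xy} denotes the closed arc of ∂∞ℍ² from x to y not containing the other two points of the 4-tuple, and I_{xy} × I_{zw} denotes the set of pairs (p,q) with p ∈ I_{xy} and q ∈ I_{zw}. -/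
/- Upper half-plane model of ℍ², ideal boundary ∂∞ℍ² = OnePoint ℝ,
   geodesics, measured geodesic laminations. -/

noncomputable section
open MeasureTheory Set
open scoped ENNReal

/-- The geodesic of ℍ² with ideal endpoints `p q ∈ ℝ ∪ {∞}`: the Euclidean
semicircle over the real axis with endpoints `p, q` (the vertical half-line
over `p` if `q = ∞`, and vice versa). -/
def geodesic (p q : OnePoint ℝ) : Set UpperHalfPlane :=
  {z | (∃ x y : ℝ, p = (x : OnePoint ℝ) ∧ q = (y : OnePoint ℝ) ∧
          ‖(z : ℂ) - (((x + y) / 2 : ℝ) : ℂ)‖ = |y - x| / 2) ∨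
       (∃ x : ℝ, ((p = (x : OnePoint ℝ) ∧ q = OnePoint.infty) ∨
                  (p = OnePoint.infty ∧ q = (x : OnePoint ℝ))) ∧
          (z : ℂ).re = x)}

/-- `g(p,q)` separates `z` and `w`: both lie off the geodesic, in two
different connected components of its complement. -/
def Separates (p q : OnePoint ℝ) (z w : UpperHalfPlane) : Prop :=
  z ∉ geodesic p q ∧ w ∉ geodesic p q ∧
    connectedComponentIn (geodesic p q)ᶜ z ≠ connectedComponentIn (geodesic p q)ᶜ w

/-- Two pairs of ideal endpoints are unlinked: the corresponding geodesics do not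
cross, i.e. they are equal or disjoint. -/
def Unlinked (p q p' q' : OnePoint ℝ) : Prop :=
  geodesic p q = geodesic p' q' ∨ geodesic p q ∩ geodesic p' q' = ∅

instance : MeasurableSpace (OnePoint ℝ) := borel _

/-- Topological support of a measure. -/
def mSupport (μ : Measure (OnePoint ℝ × OnePoint ℝ)) : Set (OnePoint ℝ × OnePoint ℝ) :=
  {x | ∀ U : Set (OnePoint ℝ × OnePoint ℝ), IsOpen U → x ∈ U → 0 < μ U}

/-- A measured geodesic lamination on ℍ², encoded as a Borel measure on pairs of
distinct ideal endpoints: it gives no mass to the diagonal, is locally finite off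
the diagonal, is invariant under swapping endpoints, and any two pairs in its
support are unlinked. -/
structure MeasuredLamination where
  μ : Measure (OnePoint ℝ × OnePoint ℝ)
  diag_null : μ {x | x.1 = x.2} = 0
  locFin : ∀ x : OnePoint ℝ × OnePoint ℝ, x.1 ≠ x.2 →
    ∃ U : Set (OnePoint ℝ × OnePoint ℝ), IsOpen U ∧ x ∈ U ∧ μ U < ⊤
  symm : μ.map Prod.swap = μ
  unlinked : ∀ x ∈ mSupport μ, ∀ y ∈ mSupport μ, x.1 ≠ x.2 → y.1 ≠ y.2 →
    Unlinked x.1 x.2 y.1 y.2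

/-- Intersection number `i([z,w], λ)` of a lamination with the geodesic segment
`[z,w]`: the mass of the set of leaves separating `z` from `w`. -/
def interNum (L : MeasuredLamination) (z w : UpperHalfPlane) : ℝ≥0∞ :=
  L.μ {pq : OnePoint ℝ × OnePoint ℝ | Separates pq.1 pq.2 z w}

/-- A measured geodesic lamination is bounded if geodesic segments of length at
most 1 have uniformly bounded intersection with it. -/
def MeasuredLamination.Bounded (L : MeasuredLamination) : Prop :=
  ∃ C : ℝ, 0 < C ∧ ∀ z w : UpperHalfPlane, dist z w ≤ 1 →
    interNum L z w ≤ ENNReal.ofReal C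

/-- Two measured geodesic laminations strongly fill if long geodesic segments
have large total intersection with them. -/
def StronglyFill (L M : MeasuredLamination) : Prop :=
  ∀ ε : ℝ, 0 < ε → ∃ c : ℝ, 0 < c ∧ ∀ z w : UpperHalfPlane, c ≤ dist z w →
    ENNReal.ofReal ε ≤ interNum L z w + interNum M z w

/-- The Cayley transform `∂∞ℍ² → S¹ ⊆ ℂ`, `x ↦ (x−i)/(x+i)`, `∞ ↦ 1`. -/
def cayley (x : OnePoint ℝ) : ℂ :=
  OnePoint.rec 1 (fun a : ℝ => ((a : ℂ) - Complex.I) / ((a : ℂ) + Complex.I)) x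

/-- The visual metric on `∂∞ℍ²` viewed from `i`. -/
def dVis (x y : OnePoint ℝ) : ℝ := ‖cayley x - cayley y‖

/-- The closed arc of `∂∞ℍ² = ℝ ∪ {∞}` from `x` to `y` in the counterclockwise
(increasing) direction, wrapping through `∞`. -/
def arcCcw (x y : OnePoint ℝ) : Set (OnePoint ℝ) :=
  {z | ∃ a b c : ℝ, x = (a : OnePoint ℝ) ∧ y = (b : OnePoint ℝ) ∧ z = (c : OnePoint ℝ) ∧
        ((a ≤ b ∧ a ≤ c ∧ c ≤ b) ∨ (b < a ∧ (a ≤ c ∨ c ≤ b)))} ∪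
  {z | z = OnePoint.infty ∧
        (x = OnePoint.infty ∨ y = OnePoint.infty ∨
         ∃ a b : ℝ, x = (a : OnePoint ℝ) ∧ y = (b : OnePoint ℝ) ∧ b < a)} ∪
  {z | ∃ a c : ℝ, x = (a : OnePoint ℝ) ∧ y = OnePoint.infty ∧ z = (c : OnePoint ℝ) ∧ a ≤ c} ∪
  {z | ∃ b c : ℝ, x = OnePoint.infty ∧ y = (b : OnePoint ℝ) ∧ z = (c : OnePoint ℝ) ∧ c ≤ b}

/-- `A` is the closed arc of `∂∞ℍ²` with endpoints `x, y` that avoids the two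
points `u, v`. -/
def IsArcAvoiding (x y u v : OnePoint ℝ) (A : Set (OnePoint ℝ)) : Prop :=
  (A = arcCcw x y ∨ A = arcCcw y x) ∧ u ∉ A ∧ v ∉ A

/-! ### Auxiliary material for the proof -/

open OnePoint in
theorem aux_geodesic_symm (p q : OnePoint ℝ) : geodesic p q = geodesic q p := by
  ext z
  constructor <;>
  · rintro (⟨x, y, h1, h2, h3⟩ | ⟨x, (⟨h1, h2⟩ | ⟨h1, h2⟩), h3⟩)
    · exact Or.inl ⟨y, x, h2, h1, by rw [add_comm y x, abs_sub_comm x y]; exact h3⟩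
    · exact Or.inr ⟨x, Or.inr ⟨h2, h1⟩, h3⟩
    · exact Or.inr ⟨x, Or.inl ⟨h2, h1⟩, h3⟩

theorem aux_mem_geodesic_cc {x y : ℝ} {z : UpperHalfPlane} :
    z ∈ geodesic (x : OnePoint ℝ) (y : OnePoint ℝ) ↔
      ‖(z : ℂ) - (((x + y) / 2 : ℝ) : ℂ)‖ = |y - x| / 2 := by
  constructor
  · rintro (⟨a, b, ha, hb, h⟩ | ⟨a, (⟨h1, h2⟩ | ⟨h1, h2⟩), h⟩)
    · rw [OnePoint.coe_eq_coe] at ha hb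
      rw [ha, hb]; exact h
    · exact absurd h2 (OnePoint.coe_ne_infty y)
    · exact absurd h1 (OnePoint.coe_ne_infty x)
  · intro h; exact Or.inl ⟨x, y, rfl, rfl, h⟩

theorem aux_mem_geodesic_ci {x : ℝ} {z : UpperHalfPlane} :
    z ∈ geodesic (x : OnePoint ℝ) OnePoint.infty ↔ (z : ℂ).re = x := by
  constructor
  · rintro (⟨a, b, ha, hb, h⟩ | ⟨a, (⟨h1, h2⟩ | ⟨h1, h2⟩), h⟩)
    · exact absurd hb.symm (OnePoint.coe_ne_infty b)
    · rw [OnePoint.coe_eq_coe] at h1; rw [h1]; exact h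
    · exact absurd h1 (OnePoint.coe_ne_infty x)
  · intro h; exact Or.inr ⟨x, Or.inl ⟨rfl, rfl⟩, h⟩

theorem aux_mem_geodesic_ic {x : ℝ} {z : UpperHalfPlane} :
    z ∈ geodesic OnePoint.infty (x : OnePoint ℝ) ↔ (z : ℂ).re = x := by
  rw [aux_geodesic_symm]; exact aux_mem_geodesic_ci

theorem aux_ne_of_mem_geodesic {p q : OnePoint ℝ} {z : UpperHalfPlane}
    (h : z ∈ geodesic p q) : p ≠ q := by
  rintro rfl
  rcases h with ⟨x, y, h1, h2, h3⟩ | ⟨x, (⟨h1, h2⟩ | ⟨h1, h2⟩), h3⟩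
  · rw [h1, OnePoint.coe_eq_coe] at h2
    subst h2
    simp only [sub_self, abs_zero, zero_div] at h3
    have : (z : ℂ) = ((x + x) / 2 : ℝ) := by
      have := norm_eq_zero.mp h3; linear_combination this
    have him : (z : ℂ).im = 0 := by rw [this]; simp
    exact absurd him (ne_of_gt z.2)
  · rw [h1] at h2; exact OnePoint.coe_ne_infty x h2
  · rw [h1] at h2; exact OnePoint.infty_ne_coe x h2

/-- A point of the upper half-plane from coordinates. -/
def aux_pt (x y : ℝ) (hy : 0 < y) : UpperHalfPlane := ⟨⟨x, y⟩, hy⟩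

@[simp] theorem aux_pt_coe (x y : ℝ) (hy : 0 < y) : (aux_pt x y hy : ℂ) = ⟨x, y⟩ := rfl

@[simp] theorem aux_pt_im (x y : ℝ) (hy : 0 < y) : (aux_pt x y hy).im = y := rfl

@[simp] theorem aux_pt_re (x y : ℝ) (hy : 0 < y) : (aux_pt x y hy : ℂ).re = x := rfl

theorem aux_abs_pt_sub (x y m : ℝ) (hy : 0 < y) :
    ‖(aux_pt x y hy : ℂ) - (m : ℂ)‖ = Real.sqrt ((x - m) ^ 2 + y ^ 2) := by
  rw [Complex.norm_def, Complex.normSq_apply]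
  norm_num [Complex.ofReal_re, Complex.ofReal_im, pow_two]

theorem aux_dist_pt (x1 x2 y1 y2 : ℝ) (h1 : 0 < y1) (h2 : 0 < y2) :
    dist (aux_pt x1 y1 h1) (aux_pt x2 y2 h2) =
      2 * Real.arsinh (Real.sqrt ((x1 - x2) ^ 2 + (y1 - y2) ^ 2) / (2 * Real.sqrt (y1 * y2))) := by
  rw [UpperHalfPlane.dist_eq, Complex.dist_eq]
  have habs : dist ((aux_pt x1 y1 h1 : ℂ)) ((aux_pt x2 y2 h2 : ℂ))
      = Real.sqrt ((x1 - x2) ^ 2 + (y1 - y2) ^ 2) := by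
    rw [Complex.dist_eq, Complex.norm_def, Complex.normSq_apply]
    norm_num [pow_two]
  rw [Complex.dist_eq] at habs
  rw [habs]
  rfl

theorem aux_arsinh_le (t : ℝ) (ht : 0 ≤ t) : Real.arsinh t ≤ t := by
  rcases eq_or_lt_of_le ht with h | h
  · simp [← h]
  · calc Real.arsinh t ≤ Real.arsinh (Real.sinh t) := by
          rw [Real.arsinh_le_arsinh]; exact (Real.self_lt_sinh_iff.mpr h).le
      _ = t := Real.arsinh_sinh t

theorem aux_dist_pt_le_one {x1 x2 y : ℝ} (hy : 0 < y) (h : |x1 - x2| ≤ y) :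
    dist (aux_pt x1 y hy) (aux_pt x2 y hy) ≤ 1 := by
  rw [aux_dist_pt]
  have hs : Real.sqrt ((x1 - x2) ^ 2 + (y - y) ^ 2) = |x1 - x2| := by
    simp [Real.sqrt_sq_eq_abs]
  have hyy : Real.sqrt (y * y) = y := by
    rw [Real.sqrt_mul_self hy.le]
  rw [hs, hyy]
  have h1 : |x1 - x2| / (2 * y) ≤ 1 / 2 := by
    rw [div_le_div_iff₀ (by linarith) (by norm_num)]
    nlinarith [abs_nonneg (x1 - x2)]
  have h2 : Real.arsinh (|x1 - x2| / (2 * y)) ≤ 1 / 2 := by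
    calc Real.arsinh (|x1 - x2| / (2 * y)) ≤ |x1 - x2| / (2 * y) :=
          aux_arsinh_le _ (by positivity)
      _ ≤ 1 / 2 := h1
  linarith

theorem aux_sep_generic {p q : OnePoint ℝ} {z w : UpperHalfPlane} {U V : Set UpperHalfPlane}
    (hU : IsOpen U) (hV : IsOpen V) (hUV : Disjoint U V)
    (hcover : (geodesic p q)ᶜ ⊆ U ∪ V) (hzU : z ∈ U) (hwV : w ∈ V)
    (hz : z ∉ geodesic p q) (hw : w ∉ geodesic p q) : Separates p q z w := by
  refine ⟨hz, hw, ?_⟩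
  have hzc : z ∈ (geodesic p q)ᶜ := hz
  have hwc : w ∈ (geodesic p q)ᶜ := hw
  have hCz : connectedComponentIn (geodesic p q)ᶜ z ⊆ U := by
    apply IsPreconnected.subset_left_of_subset_union hU hV hUV
    · exact (connectedComponentIn_subset _ _).trans hcover
    · exact ⟨z, mem_connectedComponentIn hzc, hzU⟩
    · exact isPreconnected_connectedComponentIn
  have hCw : connectedComponentIn (geodesic p q)ᶜ w ⊆ V := by
    apply IsPreconnected.subset_left_of_subset_union hV hU hUV.symm
    · exact (connectedComponentIn_subset _ _).trans (by rw [Set.union_comm]; exact hcover)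
    · exact ⟨w, mem_connectedComponentIn hwc, hwV⟩
    · exact isPreconnected_connectedComponentIn
  intro he
  have : z ∈ V := hCw (he ▸ mem_connectedComponentIn hzc)
  exact hUV.ne_of_mem hzU this rfl

theorem aux_sep_circle {u v : ℝ} (huv : u < v) {z w : UpperHalfPlane}
    (hz : ‖(z : ℂ) - (((u + v) / 2 : ℝ) : ℂ)‖ < (v - u) / 2)
    (hw : (v - u) / 2 < ‖(w : ℂ) - (((u + v) / 2 : ℝ) : ℂ)‖) :
    Separates (u : OnePoint ℝ) (v : OnePoint ℝ) z w := by
  set c : ℂ := (((u + v) / 2 : ℝ) : ℂ) with hc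
  set r : ℝ := (v - u) / 2 with hr
  have habs : |v - u| = v - u := abs_of_pos (by linarith)
  have hmem : ∀ ζ : UpperHalfPlane,
      ζ ∈ geodesic (u : OnePoint ℝ) (v : OnePoint ℝ) ↔ ‖(ζ : ℂ) - c‖ = r := by
    intro ζ; rw [aux_mem_geodesic_cc, habs]
  refine aux_sep_generic (U := {ζ : UpperHalfPlane | ‖(ζ : ℂ) - c‖ < r})
    (V := {ζ : UpperHalfPlane | r < ‖(ζ : ℂ) - c‖}) ?_ ?_ ?_ ?_ hz hw ?_ ?_
  · have : {ζ : UpperHalfPlane | ‖(ζ : ℂ) - c‖ < r}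
        = (fun ζ : UpperHalfPlane => (ζ : ℂ)) ⁻¹' Metric.ball c r := by
      ext ζ; simp [Metric.mem_ball, Complex.dist_eq]
    rw [this]
    exact Metric.isOpen_ball.preimage UpperHalfPlane.continuous_coe
  · have : {ζ : UpperHalfPlane | r < ‖(ζ : ℂ) - c‖}
        = (fun ζ : UpperHalfPlane => (ζ : ℂ)) ⁻¹' (Metric.closedBall c r)ᶜ := by
      ext ζ; simp [Metric.mem_closedBall, Complex.dist_eq, not_le]
    rw [this]
    exact (Metric.isClosed_closedBall (x := c) (ε := r)).isOpen_compl.preimage UpperHalfPlane.continuous_coe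
  · rw [Set.disjoint_left]; intro ζ h1 h2
    simp only [Set.mem_setOf_eq] at h1 h2
    exact absurd (lt_trans h2 h1) (lt_irrefl _)
  · intro ζ hζ
    rcases lt_or_gt_of_ne (fun h => hζ ((hmem ζ).mpr h)) with h | h
    · exact Or.inl h
    · exact Or.inr h
  · rw [hmem]; exact ne_of_lt hz
  · rw [hmem]; exact (ne_of_lt hw).symm

theorem aux_sep_line {u : ℝ} {z w : UpperHalfPlane}
    (hz : (z : ℂ).re < u) (hw : u < (w : ℂ).re) :
    Separates (u : OnePoint ℝ) OnePoint.infty z w := by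
  refine aux_sep_generic (U := {ζ : UpperHalfPlane | (ζ : ℂ).re < u})
    (V := {ζ : UpperHalfPlane | u < (ζ : ℂ).re}) ?_ ?_ ?_ ?_ hz hw ?_ ?_
  · exact (isOpen_lt continuous_id continuous_const).preimage
      (Complex.continuous_re.comp UpperHalfPlane.continuous_coe)
  · exact (isOpen_lt continuous_const continuous_id).preimage
      (Complex.continuous_re.comp UpperHalfPlane.continuous_coe)
  · rw [Set.disjoint_left]; intro ζ h1 h2
    simp only [Set.mem_setOf_eq] at h1 h2
    exact absurd (lt_trans h1 h2) (lt_irrefl _)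
  · intro ζ hζ
    rcases lt_or_gt_of_ne (fun h : (ζ : ℂ).re = u => hζ (aux_mem_geodesic_ci.mpr h)) with h | h
    · exact Or.inl h
    · exact Or.inr h
  · rw [aux_mem_geodesic_ci]; exact ne_of_lt hz
  · rw [aux_mem_geodesic_ci]; exact (ne_of_lt hw).symm

theorem aux_sep_endpoint_symm {p q : OnePoint ℝ} {z w : UpperHalfPlane}
    (h : Separates p q z w) : Separates q p z w := by
  unfold Separates at *
  rwa [aux_geodesic_symm q p]

theorem aux_sep_swap {p q : OnePoint ℝ} {z w : UpperHalfPlane}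
    (h : Separates p q z w) : Separates p q w z :=
  ⟨h.2.1, h.1, (h.2.2).symm⟩

theorem aux_sep_congr {p q p' q' : OnePoint ℝ} {z w : UpperHalfPlane}
    (hg : geodesic p q = geodesic p' q') (h : Separates p q z w) : Separates p' q' z w := by
  unfold Separates at *
  rwa [hg] at h

/-- Outside criterion: strictly to the left of the circle's interval. -/
theorem aux_circle_out_left {u v : ℝ} (huv : u < v) {ζ : UpperHalfPlane}
    (h : (ζ : ℂ).re < u) :
    (v - u) / 2 < ‖(ζ : ℂ) - (((u + v) / 2 : ℝ) : ℂ)‖ := by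
  have h1 := Complex.abs_re_le_norm ((ζ : ℂ) - (((u + v) / 2 : ℝ) : ℂ))
  have h2 : ((ζ : ℂ) - (((u + v) / 2 : ℝ) : ℂ)).re = (ζ : ℂ).re - (u + v) / 2 := by
    simp [Complex.sub_re]
  rw [h2] at h1
  have h3 : (v - u) / 2 < |(ζ : ℂ).re - (u + v) / 2| := by
    rw [abs_sub_comm]
    calc (v - u) / 2 < (u + v) / 2 - (ζ : ℂ).re := by linarith
      _ ≤ |(u + v) / 2 - (ζ : ℂ).re| := le_abs_self _
  linarith

theorem aux_circle_out_right {u v : ℝ} (huv : u < v) {ζ : UpperHalfPlane}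
    (h : v < (ζ : ℂ).re) :
    (v - u) / 2 < ‖(ζ : ℂ) - (((u + v) / 2 : ℝ) : ℂ)‖ := by
  have h1 := Complex.abs_re_le_norm ((ζ : ℂ) - (((u + v) / 2 : ℝ) : ℂ))
  have h2 : ((ζ : ℂ) - (((u + v) / 2 : ℝ) : ℂ)).re = (ζ : ℂ).re - (u + v) / 2 := by
    simp [Complex.sub_re]
  rw [h2] at h1
  have h3 : (v - u) / 2 < |(ζ : ℂ).re - (u + v) / 2| := by
    calc (v - u) / 2 < (ζ : ℂ).re - (u + v) / 2 := by linarith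
      _ ≤ |(ζ : ℂ).re - (u + v) / 2| := le_abs_self _
  linarith

/-- Inside a small circle nested in a bigger one. -/
theorem aux_circle_in_nested {s t u v : ℝ} (hst : s < t) (hus : u ≤ s) (htv : t ≤ v)
    {ζ : UpperHalfPlane}
    (h : ‖(ζ : ℂ) - (((s + t) / 2 : ℝ) : ℂ)‖ < (t - s) / 2) :
    ‖(ζ : ℂ) - (((u + v) / 2 : ℝ) : ℂ)‖ < (v - u) / 2 := by
  have htri := norm_sub_le_norm_sub_add_norm_sub ((ζ : ℂ)) (((s + t) / 2 : ℝ) : ℂ) (((u + v) / 2 : ℝ) : ℂ)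
  have hmm : ‖(((s + t) / 2 : ℝ) : ℂ) - (((u + v) / 2 : ℝ) : ℂ)‖
      = |(s + t) / 2 - (u + v) / 2| := by
    rw [← Complex.ofReal_sub, Complex.norm_real, Real.norm_eq_abs]
  have hle : |(s + t) / 2 - (u + v) / 2| ≤ (v - u) / 2 - (t - s) / 2 := by
    rw [abs_le]; constructor <;> [linarith; linarith]
  rw [hmm] at htri
  linarith

/-- Strictly inside, by squared coordinates. -/
theorem aux_in_disk {X Y m r : ℝ} (hY : 0 < Y) (hr : 0 < r)
    (h : (X - m) ^ 2 + Y ^ 2 < r ^ 2) :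
    ‖(aux_pt X Y hY : ℂ) - (m : ℂ)‖ < r := by
  rw [aux_abs_pt_sub]
  rw [show r = Real.sqrt (r ^ 2) from (Real.sqrt_sq hr.le).symm]
  exact Real.sqrt_lt_sqrt (by positivity) h

open TopologicalSpace in
instance aux_secondCountable : SecondCountableTopology (OnePoint ℝ) := by
  have hB : IsTopologicalBasis
      ((fun s : Set ℝ => ((↑) : ℝ → OnePoint ℝ) '' s) '' (countableBasis ℝ) ∪
        Set.range (fun n : ℕ =>
          ({OnePoint.infty} ∪ ((↑) : ℝ → OnePoint ℝ) '' (Set.Icc (-(n : ℝ)) n)ᶜ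
            : Set (OnePoint ℝ)))) := by
    apply isTopologicalBasis_of_isOpen_of_nhds
    · rintro u (⟨s, hs, rfl⟩ | ⟨n, rfl⟩)
      · exact OnePoint.isOpenMap_coe _ (isOpen_of_mem_countableBasis hs)
      · show IsOpen (({OnePoint.infty} ∪ ((↑) : ℝ → OnePoint ℝ) '' (Set.Icc (-(n : ℝ)) n)ᶜ
            : Set (OnePoint ℝ)))
        rw [OnePoint.isOpen_iff_of_mem (Set.mem_union_left _ (Set.mem_singleton _))]
        constructor
        · have hpre : ((↑) : ℝ → OnePoint ℝ) ⁻¹'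
              ({OnePoint.infty} ∪ ((↑) : ℝ → OnePoint ℝ) '' (Set.Icc (-(n : ℝ)) n)ᶜ)
              = (Set.Icc (-(n : ℝ)) n)ᶜ := by
            ext x
            simp only [Set.preimage_union, Set.mem_union, Set.mem_preimage,
              Set.mem_singleton_iff, Set.mem_image]
            constructor
            · rintro (h | h)
              · exact absurd h (OnePoint.coe_ne_infty x)
              · obtain ⟨y, hy, hxy⟩ := h
                rw [OnePoint.coe_eq_coe] at hxy; exact hxy ▸ hy
            · intro h; exact Or.inr ⟨x, h, rfl⟩
          rw [hpre, compl_compl]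
          exact isClosed_Icc
        · have hpre : ((↑) : ℝ → OnePoint ℝ) ⁻¹'
              ({OnePoint.infty} ∪ ((↑) : ℝ → OnePoint ℝ) '' (Set.Icc (-(n : ℝ)) n)ᶜ)
              = (Set.Icc (-(n : ℝ)) n)ᶜ := by
            ext x
            simp only [Set.preimage_union, Set.mem_union, Set.mem_preimage,
              Set.mem_singleton_iff, Set.mem_image]
            constructor
            · rintro (h | h)
              · exact absurd h (OnePoint.coe_ne_infty x)
              · obtain ⟨y, hy, hxy⟩ := h
                rw [OnePoint.coe_eq_coe] at hxy; exact hxy ▸ hy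
            · intro h; exact Or.inr ⟨x, h, rfl⟩
          rw [hpre, compl_compl]
          exact isCompact_Icc
    · intro a u hau hu
      induction a using OnePoint.rec with
      | infty =>
        rw [OnePoint.isOpen_iff_of_mem hau] at hu
        obtain ⟨hclosed, hcompact⟩ := hu
        obtain ⟨R, hR⟩ := hcompact.isBounded.subset_closedBall 0
        obtain ⟨n, hn⟩ := exists_nat_ge R
        refine ⟨{OnePoint.infty} ∪ ((↑) : ℝ → OnePoint ℝ) '' (Set.Icc (-(n : ℝ)) n)ᶜ,
          Set.mem_union_right _ ⟨n, rfl⟩, Set.mem_union_left _ rfl, ?_⟩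
        rintro x (hx | ⟨y, hy, rfl⟩)
        · rw [Set.mem_singleton_iff] at hx; rw [hx]; exact hau
        · by_contra hxu
          have : y ∈ ((↑) : ℝ → OnePoint ℝ) ⁻¹' u → False := fun h => hxu h
          have hyK : y ∈ (((↑) : ℝ → OnePoint ℝ) ⁻¹' u)ᶜ := fun h => hxu h
          have := hR hyK
          rw [Real.closedBall_eq_Icc] at this
          simp only [zero_sub, zero_add] at this
          apply hy
          constructor
          · linarith [this.1, neg_le_neg hn]
          · linarith [this.2]
      | coe x =>
        have hux : ((↑) : ℝ → OnePoint ℝ) ⁻¹' u ∈ nhds x := by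
          have : IsOpen (((↑) : ℝ → OnePoint ℝ) ⁻¹' u) := hu.preimage OnePoint.continuous_coe
          exact this.mem_nhds hau
        obtain ⟨s, hs, hxs, hsu⟩ := (isBasis_countableBasis ℝ).exists_subset_of_mem_open hau
          (hu.preimage OnePoint.continuous_coe)
        exact ⟨((↑) : ℝ → OnePoint ℝ) '' s, Set.mem_union_left _ ⟨s, hs, rfl⟩,
          ⟨x, hxs, rfl⟩, Set.image_subset_iff.mpr hsu⟩
  exact hB.secondCountableTopology
    (((countable_countableBasis ℝ).image _).union (Set.countable_range _))

theorem aux_supp_null (μ : Measure (OnePoint ℝ × OnePoint ℝ)) : μ (mSupport μ)ᶜ = 0 := by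
  have h : ∀ x : ((mSupport μ)ᶜ : Set (OnePoint ℝ × OnePoint ℝ)), ∃ U : Set (OnePoint ℝ × OnePoint ℝ),
      IsOpen U ∧ (x : OnePoint ℝ × OnePoint ℝ) ∈ U ∧ μ U = 0 := by
    rintro ⟨x, hx⟩
    simp only [Set.mem_compl_iff, mSupport, Set.mem_setOf_eq, not_forall] at hx
    obtain ⟨U, hUo, hxU, hU⟩ := hx
    exact ⟨U, hUo, hxU, by simpa using hU⟩
  choose U hUo hxU hU0 using h
  obtain ⟨T, hTc, hTu⟩ := TopologicalSpace.isOpen_iUnion_countable U hUo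
  have hsub : (mSupport μ)ᶜ ⊆ ⋃ i ∈ T, U i := by
    intro x hx
    rw [hTu]
    exact Set.mem_iUnion.mpr ⟨⟨x, hx⟩, hxU ⟨x, hx⟩⟩
  refine le_antisymm ?_ (zero_le)
  calc μ (mSupport μ)ᶜ ≤ μ (⋃ i ∈ T, U i) := measure_mono hsub
    _ = 0 := by
        apply measure_biUnion_null_iff hTc |>.mpr
        intro i _; exact hU0 i
    _ ≤ 0 := le_refl _

/-- Explicit short-distance separating witnesses for any geodesic. -/
theorem aux_exists_witness {p q : OnePoint ℝ} (hpq : p ≠ q) :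
    ∃ z w : UpperHalfPlane, dist z w ≤ 1 ∧ Separates p q z w := by
  have key : ∀ u v : ℝ, u < v → ∃ z w : UpperHalfPlane, dist z w ≤ 1 ∧
      Separates (u : OnePoint ℝ) (v : OnePoint ℝ) z w := by
    intro u v huv
    set m := (u + v) / 2
    set r := (v - u) / 2 with hr
    have hrpos : 0 < r := by simp only [hr]; linarith
    have h45 : 0 < 4 * r / 5 := by linarith
    have h54 : 0 < 5 * r / 4 := by linarith
    refine ⟨aux_pt m (4 * r / 5) h45, aux_pt m (5 * r / 4) h54, ?_, ?_⟩
    · rw [aux_dist_pt]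
      have h1 : Real.sqrt ((m - m) ^ 2 + (4 * r / 5 - 5 * r / 4) ^ 2) = 9 * r / 20 := by
        rw [show (m - m) ^ 2 + (4 * r / 5 - 5 * r / 4) ^ 2 = (9 * r / 20) ^ 2 by ring]
        exact Real.sqrt_sq (by linarith)
      have h2 : Real.sqrt (4 * r / 5 * (5 * r / 4)) = r := by
        rw [show 4 * r / 5 * (5 * r / 4) = r ^ 2 by ring]
        exact Real.sqrt_sq hrpos.le
      rw [h1, h2]
      have h3 : Real.arsinh (9 * r / 20 / (2 * r)) ≤ 9 / 40 := by
        rw [show 9 * r / 20 / (2 * r) = 9 / 40 by field_simp; ring]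
        calc Real.arsinh (9 / 40) ≤ 9 / 40 := aux_arsinh_le _ (by norm_num)
          _ ≤ 9 / 40 := le_refl _
      linarith
    · apply aux_sep_circle huv
      · rw [show (((u + v) / 2 : ℝ) : ℂ) = (m : ℂ) by rfl]
        apply aux_in_disk h45 (by linarith : (0:ℝ) < (v - u) / 2)
        have : (m - m) ^ 2 + (4 * r / 5) ^ 2 = (4 * r / 5) ^ 2 := by ring
        rw [this, hr]
        nlinarith
      · rw [show (((u + v) / 2 : ℝ) : ℂ) = (m : ℂ) by rfl]
        rw [aux_abs_pt_sub]
        have : Real.sqrt ((m - m) ^ 2 + (5 * r / 4) ^ 2) = 5 * r / 4 := by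
          rw [show (m - m) ^ 2 + (5 * r / 4) ^ 2 = (5 * r / 4) ^ 2 by ring]
          exact Real.sqrt_sq (by linarith)
        rw [this, hr]
        nlinarith
  have keyl : ∀ u : ℝ, ∃ z w : UpperHalfPlane, dist z w ≤ 1 ∧
      Separates (u : OnePoint ℝ) OnePoint.infty z w := by
    intro u
    refine ⟨aux_pt (u - 1/4) 1 one_pos, aux_pt (u + 1/4) 1 one_pos, ?_, ?_⟩
    · apply aux_dist_pt_le_one
      rw [show u - 1/4 - (u + 1/4) = -(1/2) by ring, abs_neg, abs_of_pos (by norm_num)]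
      norm_num
    · refine aux_sep_line ?_ ?_ <;> simp only [aux_pt_re] <;> linarith
  induction p using OnePoint.rec with
  | infty =>
    induction q using OnePoint.rec with
    | infty => exact absurd rfl hpq
    | coe v =>
      obtain ⟨z, w, hd, hs⟩ := keyl v
      exact ⟨z, w, hd, aux_sep_endpoint_symm hs⟩
  | coe u =>
    induction q using OnePoint.rec with
    | infty => exact keyl u
    | coe v =>
      have huv : u ≠ v := fun h => hpq (by rw [h])
      rcases lt_or_gt_of_ne huv with h | h
      · exact key u v h
      · obtain ⟨z, w, hd, hs⟩ := key v u h
        exact ⟨z, w, hd, aux_sep_endpoint_symm hs⟩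

theorem aux_through_bound (L : MeasuredLamination) {CL : ℝ}
    (hBL : ∀ z w : UpperHalfPlane, dist z w ≤ 1 → interNum L z w ≤ ENNReal.ofReal CL)
    (ζ : UpperHalfPlane) :
    L.μ {pq : OnePoint ℝ × OnePoint ℝ | ζ ∈ geodesic pq.1 pq.2} ≤ ENNReal.ofReal CL := by
  set T := {pq : OnePoint ℝ × OnePoint ℝ | ζ ∈ geodesic pq.1 pq.2} with hT
  by_cases hne : (T ∩ mSupport L.μ).Nonempty
  · obtain ⟨pq₀, h0T, h0s⟩ := hne
    have hp0 : pq₀.1 ≠ pq₀.2 := aux_ne_of_mem_geodesic h0T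
    obtain ⟨z, w, hd, hsep⟩ := aux_exists_witness hp0
    have hsub : T ⊆ (mSupport L.μ)ᶜ ∪ {pq : OnePoint ℝ × OnePoint ℝ | Separates pq.1 pq.2 z w} := by
      intro pq hpq
      by_cases hs : pq ∈ mSupport L.μ
      · right
        have h1 : pq.1 ≠ pq.2 := aux_ne_of_mem_geodesic hpq
        rcases L.unlinked pq hs pq₀ h0s h1 hp0 with heq | hdisj
        · exact aux_sep_congr heq.symm hsep
        · exact absurd hdisj (by
            rw [← Set.not_nonempty_iff_eq_empty, not_not]
            exact ⟨ζ, hpq, h0T⟩)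
      · exact Or.inl hs
    calc L.μ T ≤ L.μ ((mSupport L.μ)ᶜ ∪ {pq : OnePoint ℝ × OnePoint ℝ | Separates pq.1 pq.2 z w}) :=
          measure_mono hsub
      _ ≤ L.μ (mSupport L.μ)ᶜ + L.μ {pq : OnePoint ℝ × OnePoint ℝ | Separates pq.1 pq.2 z w} :=
          measure_union_le _ _
      _ = L.μ {pq : OnePoint ℝ × OnePoint ℝ | Separates pq.1 pq.2 z w} := by
          rw [aux_supp_null]; rw [zero_add]
      _ ≤ ENNReal.ofReal CL := hBL z w hd
  · have hsub : T ⊆ (mSupport L.μ)ᶜ := by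
      intro pq hpq
      by_contra hs
      exact hne ⟨pq, hpq, not_not.mp hs⟩
    calc L.μ T ≤ L.μ (mSupport L.μ)ᶜ := measure_mono hsub
      _ = 0 := aux_supp_null _
      _ ≤ ENNReal.ofReal CL := zero_le

theorem aux_sep_chain {p q : OnePoint ℝ} {z w z' : UpperHalfPlane} (h : Separates p q z w) :
    Separates p q z z' ∨ Separates p q z' w ∨ z' ∈ geodesic p q := by
  by_cases hz' : z' ∈ geodesic p q
  · exact Or.inr (Or.inr hz')
  by_cases hc : connectedComponentIn (geodesic p q)ᶜ z = connectedComponentIn (geodesic p q)ᶜ z'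
  · exact Or.inr (Or.inl ⟨hz', h.2.1, by rw [← hc]; exact h.2.2⟩)
  · exact Or.inl ⟨h.1, hz', hc⟩

theorem aux_sep_iterate {p q : OnePoint ℝ} (f : ℕ → UpperHalfPlane) :
    ∀ n : ℕ, Separates p q (f 0) (f n) →
      (∃ j, j < n ∧ Separates p q (f j) (f (j + 1))) ∨
      (∃ j, 0 < j ∧ j < n ∧ f j ∈ geodesic p q) := by
  intro n
  induction n with
  | zero => intro h; exact absurd rfl h.2.2
  | succ n ih =>
    intro h
    rcases n.eq_zero_or_pos with rfl | hn
    · exact Or.inl ⟨0, by omega, h⟩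
    rcases aux_sep_chain (z' := f n) h with h1 | h1 | h1
    · rcases ih h1 with ⟨j, hj, hs⟩ | ⟨j, hj0, hj, hm⟩
      · exact Or.inl ⟨j, by omega, hs⟩
      · exact Or.inr ⟨j, hj0, by omega, hm⟩
    · exact Or.inl ⟨n, by omega, h1⟩
    · exact Or.inr ⟨n, hn, by omega, h1⟩

theorem aux_chain_bound (L : MeasuredLamination) {CL : ℝ} (hCL : 0 ≤ CL)
    (hBL : ∀ z w : UpperHalfPlane, dist z w ≤ 1 → interNum L z w ≤ ENNReal.ofReal CL)
    (x y : ℝ) (hy : 0 < y) (S : Set (OnePoint ℝ × OnePoint ℝ))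
    (hS : ∀ pq ∈ S, Separates pq.1 pq.2 (aux_pt x y hy) (aux_pt (x + 8 * y) y hy)) :
    L.μ S ≤ ENNReal.ofReal (15 * CL) := by
  set f : ℕ → UpperHalfPlane := fun j => aux_pt (x + j * y) y hy with hf
  have hf0 : f 0 = aux_pt x y hy := by simp [hf]
  have hf8 : f 8 = aux_pt (x + 8 * y) y hy := by norm_num [hf]
  have hsub : S ⊆ (⋃ j ∈ Finset.range 8,
      {pq : OnePoint ℝ × OnePoint ℝ | Separates pq.1 pq.2 (f j) (f (j + 1))}) ∪
      ⋃ j ∈ Finset.range 7, {pq : OnePoint ℝ × OnePoint ℝ | f (j + 1) ∈ geodesic pq.1 pq.2} := by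
    intro pq hpq
    have := hS pq hpq
    rw [← hf0, ← hf8] at this
    rcases aux_sep_iterate f 8 this with ⟨j, hj, hs⟩ | ⟨j, hj0, hj, hm⟩
    · exact Or.inl (Set.mem_biUnion (Finset.mem_range.mpr hj) hs)
    · refine Or.inr (Set.mem_biUnion
        (show j - 1 ∈ Finset.range 7 from Finset.mem_range.mpr (by omega)) ?_)
      show f (j - 1 + 1) ∈ geodesic pq.1 pq.2
      have hj1 : j - 1 + 1 = j := by omega
      rw [hj1]
      exact hm
  have hdist : ∀ j : ℕ, dist (f j) (f (j + 1)) ≤ 1 := by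
    intro j
    apply aux_dist_pt_le_one
    have hcast : ((j + 1 : ℕ) : ℝ) = (j : ℝ) + 1 := by push_cast; ring
    rw [hcast, show x + (j : ℝ) * y - (x + ((j : ℝ) + 1) * y) = -y by ring, abs_neg,
      abs_of_pos hy]
  calc L.μ S ≤ _ := measure_mono hsub
    _ ≤ L.μ (⋃ j ∈ Finset.range 8,
          {pq : OnePoint ℝ × OnePoint ℝ | Separates pq.1 pq.2 (f j) (f (j + 1))}) +
        L.μ (⋃ j ∈ Finset.range 7,
          {pq : OnePoint ℝ × OnePoint ℝ | f (j + 1) ∈ geodesic pq.1 pq.2}) :=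
        measure_union_le _ _
    _ ≤ (∑ j ∈ Finset.range 8,
          L.μ {pq : OnePoint ℝ × OnePoint ℝ | Separates pq.1 pq.2 (f j) (f (j + 1))}) +
        ∑ j ∈ Finset.range 7,
          L.μ {pq : OnePoint ℝ × OnePoint ℝ | f (j + 1) ∈ geodesic pq.1 pq.2} := by
        gcongr <;> exact measure_biUnion_finset_le _ _
    _ ≤ (∑ _j ∈ Finset.range 8, ENNReal.ofReal CL) +
        ∑ _j ∈ Finset.range 7, ENNReal.ofReal CL := by
        gcongr with j hj j hj
        · exact hBL _ _ (hdist j)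
        · exact aux_through_bound L hBL _
    _ = 8 * ENNReal.ofReal CL + 7 * ENNReal.ofReal CL := by
        simp [Finset.sum_const, mul_comm]
    _ = ENNReal.ofReal (15 * CL) := by
        rw [← ENNReal.ofReal_ofNat 8, ← ENNReal.ofReal_ofNat 7,
          ← ENNReal.ofReal_mul (by norm_num : (0:ℝ) ≤ 8),
          ← ENNReal.ofReal_mul (by norm_num : (0:ℝ) ≤ 7),
          ← ENNReal.ofReal_add (by positivity) (by positivity)]
        congr 1; ring

theorem aux_not_disjoint_cc {x1 x2 x3 x4 : ℝ} (h12 : x1 < x2) (h23 : x2 < x3) (h34 : x3 < x4) :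
    ¬ Disjoint (geodesic (x1 : OnePoint ℝ) (x3 : OnePoint ℝ))
      (geodesic (x2 : OnePoint ℝ) (x4 : OnePoint ℝ)) := by
  rw [Set.not_disjoint_iff]
  set m1 : ℝ := (x1 + x3) / 2 with hm1
  set r1 : ℝ := (x3 - x1) / 2 with hr1
  set m2 : ℝ := (x2 + x4) / 2 with hm2
  set r2 : ℝ := (x4 - x2) / 2 with hr2
  have hD : m2 - m1 > 0 := by simp only [hm1, hm2]; linarith
  set X : ℝ := (r1 ^ 2 - r2 ^ 2 + m2 ^ 2 - m1 ^ 2) / (2 * (m2 - m1)) with hX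
  have hkey : (X - m1) ^ 2 < r1 ^ 2 := by
    have h1 : X - m1 = (r1 ^ 2 - r2 ^ 2 + (m2 - m1) ^ 2) / (2 * (m2 - m1)) := by
      rw [hX]; field_simp; ring
    rw [h1, div_pow, div_lt_iff₀ (by positivity)]
    have e1 : r1 + r2 - (m2 - m1) = x3 - x2 := by
      simp only [hr1, hr2, hm1, hm2]; ring
    have e2 : (m2 - m1) - (r1 - r2) = x4 - x3 := by
      simp only [hr1, hr2, hm1, hm2]; ring
    have e3 : (m2 - m1) + (r1 - r2) = x2 - x1 := by
      simp only [hr1, hr2, hm1, hm2]; ring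
    have f1 : 2 * (m2 - m1) * r1 - (r1 ^ 2 - r2 ^ 2 + (m2 - m1) ^ 2)
        = (x3 - x2) * (x4 - x3) := by
      simp only [hr1, hr2, hm1, hm2]; ring
    have f2 : 2 * (m2 - m1) * r1 + (r1 ^ 2 - r2 ^ 2 + (m2 - m1) ^ 2)
        = (x2 - x1) * (x4 - x1) := by
      simp only [hr1, hr2, hm1, hm2]; ring
    have hprod : 0 < (2 * (m2 - m1) * r1 - (r1 ^ 2 - r2 ^ 2 + (m2 - m1) ^ 2)) *
        (2 * (m2 - m1) * r1 + (r1 ^ 2 - r2 ^ 2 + (m2 - m1) ^ 2)) := by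
      rw [f1, f2]
      apply mul_pos (mul_pos (by linarith) (by linarith)) (mul_pos (by linarith) (by linarith))
    nlinarith [hprod]
  have hY2 : 0 < r1 ^ 2 - (X - m1) ^ 2 := by linarith
  set Y : ℝ := Real.sqrt (r1 ^ 2 - (X - m1) ^ 2) with hY
  have hYpos : 0 < Y := Real.sqrt_pos.mpr hY2
  have hYsq : Y ^ 2 = r1 ^ 2 - (X - m1) ^ 2 := Real.sq_sqrt hY2.le
  have hsecond : (X - m2) ^ 2 + Y ^ 2 = r2 ^ 2 := by
    have h1 : (X - m1) ^ 2 - (X - m2) ^ 2 = r1 ^ 2 - r2 ^ 2 := by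
      have expand : (X - m1) ^ 2 - (X - m2) ^ 2 = (2 * X - m1 - m2) * (m2 - m1) := by ring
      rw [expand, hX]
      field_simp
      ring
    linarith [hYsq]
  refine ⟨aux_pt X Y hYpos, ?_, ?_⟩
  · rw [aux_mem_geodesic_cc, aux_abs_pt_sub]
    rw [show |x3 - x1| = x3 - x1 from abs_of_pos (by linarith)]
    rw [show (X - (x1 + x3) / 2) ^ 2 + Y ^ 2 = ((x3 - x1) / 2) ^ 2 by
      have : (X - (x1 + x3) / 2) ^ 2 = (X - m1) ^ 2 := by rw [hm1]
      rw [this, hYsq, hr1]; ring]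
    exact Real.sqrt_sq (by linarith)
  · rw [aux_mem_geodesic_cc, aux_abs_pt_sub]
    rw [show |x4 - x2| = x4 - x2 from abs_of_pos (by linarith)]
    rw [show (X - (x2 + x4) / 2) ^ 2 + Y ^ 2 = ((x4 - x2) / 2) ^ 2 by
      have h1 : (X - (x2 + x4) / 2) ^ 2 = (X - m2) ^ 2 := by rw [hm2]
      rw [h1]
      have : r2 ^ 2 = ((x4 - x2) / 2) ^ 2 := by rw [hr2]
      linarith [hsecond]]
    exact Real.sqrt_sq (by linarith)

theorem aux_not_disjoint_ci {x1 x2 x3 : ℝ} (h12 : x1 < x2) (h23 : x2 < x3) :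
    ¬ Disjoint (geodesic (x1 : OnePoint ℝ) (x3 : OnePoint ℝ))
      (geodesic (x2 : OnePoint ℝ) OnePoint.infty) := by
  rw [Set.not_disjoint_iff]
  have hY2 : 0 < ((x3 - x1) / 2) ^ 2 - (x2 - (x1 + x3) / 2) ^ 2 := by nlinarith
  set Y : ℝ := Real.sqrt (((x3 - x1) / 2) ^ 2 - (x2 - (x1 + x3) / 2) ^ 2) with hY
  have hYpos : 0 < Y := Real.sqrt_pos.mpr hY2
  have hYsq : Y ^ 2 = ((x3 - x1) / 2) ^ 2 - (x2 - (x1 + x3) / 2) ^ 2 := Real.sq_sqrt hY2.le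
  refine ⟨aux_pt x2 Y hYpos, ?_, ?_⟩
  · rw [aux_mem_geodesic_cc, aux_abs_pt_sub]
    rw [show |x3 - x1| = x3 - x1 from abs_of_pos (by linarith)]
    rw [show (x2 - (x1 + x3) / 2) ^ 2 + Y ^ 2 = ((x3 - x1) / 2) ^ 2 by rw [hYsq]; ring]
    exact Real.sqrt_sq (by linarith)
  · rw [aux_mem_geodesic_ci, aux_pt_re]

/-! Arc characterizations. -/

theorem aux_arcCcw_cc {s t : ℝ} (hst : s ≤ t) :
    arcCcw (s : OnePoint ℝ) (t : OnePoint ℝ)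
      = {z : OnePoint ℝ | ∃ c : ℝ, z = (c : OnePoint ℝ) ∧ s ≤ c ∧ c ≤ t} := by
  ext z
  rw [arcCcw]
  constructor
  · rintro ((((⟨a, b, c, ha, hb, hz, h⟩ | ⟨hz, (h | h | ⟨a, b, ha, hb, h⟩)⟩) |
      ⟨a, c, ha, hb, hz, h⟩) | ⟨b, c, ha, hb, hz, h⟩))
    · rw [OnePoint.coe_eq_coe] at ha hb
      rcases h with ⟨h1, h2, h3⟩ | ⟨h1, _⟩
      · exact ⟨c, hz, by rw [ha]; exact h2, by rw [hb]; exact h3⟩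
      · rw [← ha, ← hb] at h1; exact absurd hst (not_le.mpr h1)
    · exact absurd h (OnePoint.coe_ne_infty s)
    · exact absurd h (OnePoint.coe_ne_infty t)
    · rw [OnePoint.coe_eq_coe] at ha hb
      rw [← ha, ← hb] at h; exact absurd hst (not_le.mpr h)
    · exact absurd hb (OnePoint.coe_ne_infty t)
    · exact absurd ha (OnePoint.coe_ne_infty s)
  · rintro ⟨c, hz, h1, h2⟩
    exact Or.inl (Or.inl (Or.inl ⟨s, t, c, rfl, rfl, hz, Or.inl ⟨hst, h1, h2⟩⟩))

theorem aux_arcCcw_wrap {s t : ℝ} (hts : t < s) :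
    arcCcw (s : OnePoint ℝ) (t : OnePoint ℝ)
      = {z : OnePoint ℝ | z = OnePoint.infty ∨
          ∃ c : ℝ, z = (c : OnePoint ℝ) ∧ (s ≤ c ∨ c ≤ t)} := by
  ext z
  rw [arcCcw]
  constructor
  · rintro ((((⟨a, b, c, ha, hb, hz, h⟩ | ⟨hz, _⟩) | ⟨a, c, ha, hb, hz, h⟩) |
      ⟨b, c, ha, hb, hz, h⟩))
    · rw [OnePoint.coe_eq_coe] at ha hb
      rcases h with ⟨h1, _, _⟩ | ⟨_, h2⟩
      · rw [← ha, ← hb] at h1; exact absurd h1 (not_le.mpr hts)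
      · rw [← ha, ← hb] at h2; exact Or.inr ⟨c, hz, h2⟩
    · exact Or.inl hz
    · exact absurd hb (OnePoint.coe_ne_infty t)
    · exact absurd ha (OnePoint.coe_ne_infty s)
  · rintro (hz | ⟨c, hz, h⟩)
    · exact Or.inl (Or.inl (Or.inr ⟨hz, Or.inr (Or.inr ⟨s, t, rfl, rfl, hts⟩)⟩))
    · exact Or.inl (Or.inl (Or.inl ⟨s, t, c, rfl, rfl, hz, Or.inr ⟨hts, h⟩⟩))

theorem aux_arcCcw_ci (s : ℝ) :
    arcCcw (s : OnePoint ℝ) OnePoint.infty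
      = {z : OnePoint ℝ | z = OnePoint.infty ∨ ∃ c : ℝ, z = (c : OnePoint ℝ) ∧ s ≤ c} := by
  ext z
  rw [arcCcw]
  constructor
  · rintro ((((⟨a, b, c, ha, hb, hz, h⟩ | ⟨hz, _⟩) | ⟨a, c, ha, hb, hz, h⟩) |
      ⟨b, c, ha, hb, hz, h⟩))
    · exact absurd hb.symm (OnePoint.coe_ne_infty b)
    · exact Or.inl hz
    · rw [OnePoint.coe_eq_coe] at ha
      exact Or.inr ⟨c, hz, ha ▸ h⟩
    · exact absurd ha (OnePoint.coe_ne_infty s)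
  · rintro (hz | ⟨c, hz, h⟩)
    · exact Or.inl (Or.inl (Or.inr ⟨hz, Or.inr (Or.inl rfl)⟩))
    · exact Or.inl (Or.inr ⟨s, c, rfl, rfl, hz, h⟩)

theorem aux_arcCcw_ic (t : ℝ) :
    arcCcw OnePoint.infty (t : OnePoint ℝ)
      = {z : OnePoint ℝ | z = OnePoint.infty ∨ ∃ c : ℝ, z = (c : OnePoint ℝ) ∧ c ≤ t} := by
  ext z
  rw [arcCcw]
  constructor
  · rintro ((((⟨a, b, c, ha, hb, hz, h⟩ | ⟨hz, _⟩) | ⟨a, c, ha, hb, hz, h⟩) |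
      ⟨b, c, ha, hb, hz, h⟩))
    · exact absurd ha.symm (OnePoint.coe_ne_infty a)
    · exact Or.inl hz
    · exact absurd ha.symm (OnePoint.coe_ne_infty a)
    · rw [OnePoint.coe_eq_coe] at hb
      exact Or.inr ⟨c, hz, hb ▸ h⟩
  · rintro (hz | ⟨c, hz, h⟩)
    · exact Or.inl (Or.inl (Or.inr ⟨hz, Or.inl rfl⟩))
    · exact Or.inr ⟨t, c, rfl, rfl, hz, h⟩

/-! Arc pinning lemmas. -/

theorem aux_arc_pin_cc {s t : ℝ} (hst : s < t) {u : OnePoint ℝ} {A : Set (OnePoint ℝ)}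
    (hX : A = arcCcw (s : OnePoint ℝ) (t : OnePoint ℝ) ∨
          A = arcCcw (t : OnePoint ℝ) (s : OnePoint ℝ))
    (hu : u ∉ A) (huW : u ∈ arcCcw (t : OnePoint ℝ) (s : OnePoint ℝ)) :
    A = {z : OnePoint ℝ | ∃ c : ℝ, z = (c : OnePoint ℝ) ∧ s ≤ c ∧ c ≤ t} := by
  rcases hX with h | h
  · rw [h]; exact aux_arcCcw_cc hst.le
  · rw [h] at hu; exact absurd huW hu

theorem aux_arc_pin_wrap {s t : ℝ} (hst : s < t) {u : OnePoint ℝ} {A : Set (OnePoint ℝ)}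
    (hX : A = arcCcw (s : OnePoint ℝ) (t : OnePoint ℝ) ∨
          A = arcCcw (t : OnePoint ℝ) (s : OnePoint ℝ))
    (hu : u ∉ A) (huC : u ∈ arcCcw (s : OnePoint ℝ) (t : OnePoint ℝ)) :
    A = {z : OnePoint ℝ | z = OnePoint.infty ∨
          ∃ c : ℝ, z = (c : OnePoint ℝ) ∧ (t ≤ c ∨ c ≤ s)} := by
  rcases hX with h | h
  · rw [h] at hu; exact absurd huC hu
  · rw [h]; exact aux_arcCcw_wrap hst

theorem aux_arc_pin_ci {s : ℝ} {u : OnePoint ℝ} {A : Set (OnePoint ℝ)}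
    (hX : A = arcCcw (s : OnePoint ℝ) OnePoint.infty ∨
          A = arcCcw OnePoint.infty (s : OnePoint ℝ))
    (hu : u ∉ A) (huL : u ∈ arcCcw OnePoint.infty (s : OnePoint ℝ)) :
    A = {z : OnePoint ℝ | z = OnePoint.infty ∨ ∃ c : ℝ, z = (c : OnePoint ℝ) ∧ s ≤ c} := by
  rcases hX with h | h
  · rw [h]; exact aux_arcCcw_ci s
  · rw [h] at hu; exact absurd huL hu

theorem aux_arc_pin_ic {s : ℝ} {u : OnePoint ℝ} {A : Set (OnePoint ℝ)}
    (hX : A = arcCcw (s : OnePoint ℝ) OnePoint.infty ∨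
          A = arcCcw OnePoint.infty (s : OnePoint ℝ))
    (hu : u ∉ A) (huR : u ∈ arcCcw (s : OnePoint ℝ) OnePoint.infty) :
    A = {z : OnePoint ℝ | z = OnePoint.infty ∨ ∃ c : ℝ, z = (c : OnePoint ℝ) ∧ c ≤ s} := by
  rcases hX with h | h
  · rw [h] at hu; exact absurd huR hu
  · rw [h]; exact aux_arcCcw_ic s

/-! Arc subsets of the boundary circle. -/

def aux_Scc (s t : ℝ) : Set (OnePoint ℝ) :=
  {z : OnePoint ℝ | ∃ c : ℝ, z = (c : OnePoint ℝ) ∧ s ≤ c ∧ c ≤ t}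

def aux_Swrap (s t : ℝ) : Set (OnePoint ℝ) :=
  {z : OnePoint ℝ | z = OnePoint.infty ∨ ∃ c : ℝ, z = (c : OnePoint ℝ) ∧ (t ≤ c ∨ c ≤ s)}

def aux_SgeInf (s : ℝ) : Set (OnePoint ℝ) :=
  {z : OnePoint ℝ | z = OnePoint.infty ∨ ∃ c : ℝ, z = (c : OnePoint ℝ) ∧ s ≤ c}

def aux_SleInf (s : ℝ) : Set (OnePoint ℝ) :=
  {z : OnePoint ℝ | z = OnePoint.infty ∨ ∃ c : ℝ, z = (c : OnePoint ℝ) ∧ c ≤ s}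

/-- Core geometric lemma, all-real configuration `x1 < x2 < x3 < x4`:
one of the two pairings admits a short separating segment for all its leaves. -/
theorem aux_core_allreal (x1 x2 x3 x4 : ℝ) (h12 : x1 < x2) (h23 : x2 < x3) (h34 : x3 < x4) :
    (∃ x y : ℝ, ∃ hy : 0 < y, ∀ p q : OnePoint ℝ,
      ((p ∈ aux_Scc x1 x2 ∧ q ∈ aux_Scc x3 x4) ∨ (p ∈ aux_Scc x3 x4 ∧ q ∈ aux_Scc x1 x2)) →
        Separates p q (aux_pt x y hy) (aux_pt (x + 8 * y) y hy)) ∨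
    (∃ x y : ℝ, ∃ hy : 0 < y, ∀ p q : OnePoint ℝ,
      ((p ∈ aux_Scc x2 x3 ∧ q ∈ aux_Swrap x1 x4) ∨ (p ∈ aux_Swrap x1 x4 ∧ q ∈ aux_Scc x2 x3)) →
        Separates p q (aux_pt x y hy) (aux_pt (x + 8 * y) y hy)) := by
  set r1 : ℝ := (x2 - x1) / 2 with hr1
  set rm : ℝ := (x3 - x2) / 2 with hrm
  set r2 : ℝ := (x4 - x3) / 2 with hr2
  have hr1p : 0 < r1 := by simp only [hr1]; linarith
  have hrmp : 0 < rm := by simp only [hrm]; linarith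
  have hr2p : 0 < r2 := by simp only [hr2]; linarith
  by_cases hA : r1 ≤ rm
  · -- left witness for pairing 1
    left
    have hy : 0 < r1 / 2 := by linarith
    refine ⟨x1 - r1, r1 / 2, hy, ?_⟩
    have hW : x1 - r1 + 8 * (r1 / 2) = x2 + r1 := by simp only [hr1]; ring
    have hkey : ∀ pr qr : ℝ, x1 ≤ pr → pr ≤ x2 → x3 ≤ qr → qr ≤ x4 →
        Separates (pr : OnePoint ℝ) (qr : OnePoint ℝ)
          (aux_pt (x1 - r1) (r1 / 2) hy) (aux_pt (x1 - r1 + 8 * (r1 / 2)) (r1 / 2) hy) := by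
      intro pr qr hp1 hp2 hq1 hq2
      have hpq : pr < qr := by linarith
      apply aux_sep_swap
      apply aux_sep_circle hpq
      · -- inside : right point
        rw [hW]
        apply aux_circle_in_nested h23 hp2 hq1
        apply aux_in_disk hy (by linarith : (0:ℝ) < (x3 - x2) / 2)
        have : (x2 + r1 - (x2 + x3) / 2) ^ 2 = (r1 - rm) ^ 2 := by
          rw [hrm]; ring_nf
        rw [this]
        rw [hrm] at hA ⊢
        nlinarith
      · -- outside : left point
        apply aux_circle_out_left hpq
        rw [aux_pt_re]
        linarith
    rintro p q (⟨⟨pr, rfl, hp1, hp2⟩, ⟨qr, rfl, hq1, hq2⟩⟩ |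
      ⟨⟨qr, rfl, hq1, hq2⟩, ⟨pr, rfl, hp1, hp2⟩⟩)
    · exact hkey pr qr hp1 hp2 hq1 hq2
    · exact aux_sep_endpoint_symm (hkey pr qr hp1 hp2 hq1 hq2)
  by_cases hB : r2 ≤ rm
  · -- right witness for pairing 1
    left
    have hy : 0 < r2 / 2 := by linarith
    refine ⟨x3 - r2, r2 / 2, hy, ?_⟩
    have hW : x3 - r2 + 8 * (r2 / 2) = x4 + r2 := by simp only [hr2]; ring
    have hkey : ∀ pr qr : ℝ, x1 ≤ pr → pr ≤ x2 → x3 ≤ qr → qr ≤ x4 →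
        Separates (pr : OnePoint ℝ) (qr : OnePoint ℝ)
          (aux_pt (x3 - r2) (r2 / 2) hy) (aux_pt (x3 - r2 + 8 * (r2 / 2)) (r2 / 2) hy) := by
      intro pr qr hp1 hp2 hq1 hq2
      have hpq : pr < qr := by linarith
      apply aux_sep_circle hpq
      · -- inside : left point
        apply aux_circle_in_nested h23 hp2 hq1
        apply aux_in_disk hy (by linarith : (0:ℝ) < (x3 - x2) / 2)
        have : (x3 - r2 - (x2 + x3) / 2) ^ 2 = (rm - r2) ^ 2 := by
          rw [hrm]; ring_nf
        rw [this]
        rw [hrm] at hB ⊢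
        nlinarith
      · -- outside : right point
        apply aux_circle_out_right hpq
        rw [hW, aux_pt_re]
        linarith
    rintro p q (⟨⟨pr, rfl, hp1, hp2⟩, ⟨qr, rfl, hq1, hq2⟩⟩ |
      ⟨⟨qr, rfl, hq1, hq2⟩, ⟨pr, rfl, hp1, hp2⟩⟩)
    · exact hkey pr qr hp1 hp2 hq1 hq2
    · exact aux_sep_endpoint_symm (hkey pr qr hp1 hp2 hq1 hq2)
  · -- middle witness for pairing 2
    right
    push_neg at hA hB
    have hy : 0 < rm / 2 := by linarith
    refine ⟨x2 - rm, rm / 2, hy, ?_⟩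
    have hW : x2 - rm + 8 * (rm / 2) = x3 + rm := by simp only [hrm]; ring
    have hkey : ∀ (qr : ℝ) (p : OnePoint ℝ), x2 ≤ qr → qr ≤ x3 → p ∈ aux_Swrap x1 x4 →
        Separates (qr : OnePoint ℝ) p
          (aux_pt (x2 - rm) (rm / 2) hy) (aux_pt (x2 - rm + 8 * (rm / 2)) (rm / 2) hy) := by
      intro qr p hq1 hq2 hp
      rcases hp with hp | ⟨pr, rfl, hp⟩
      · -- p = ∞ : vertical line over qr
        rw [hp]
        apply aux_sep_line
        · rw [aux_pt_re]; linarith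
        · rw [hW, aux_pt_re]; linarith
      rcases hp with hp | hp
      · -- pr ≥ x4 : circle (qr, pr), inside point is the right one
        apply aux_sep_swap
        apply aux_sep_circle (show qr < pr by linarith)
        · -- right point inside
          rw [hW]
          apply aux_circle_in_nested h34 hq2 hp
          apply aux_in_disk hy (by linarith : (0:ℝ) < (x4 - x3) / 2)
          have : (x3 + rm - (x3 + x4) / 2) ^ 2 = (rm - r2) ^ 2 := by
            rw [hrm, hr2]; ring_nf
          rw [this]
          rw [hrm, hr2] at hB ⊢
          nlinarith
        · -- left point outside
          apply aux_circle_out_left (show qr < pr by linarith)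
          rw [aux_pt_re]
          linarith
      · -- pr ≤ x1 : circle (pr, qr), inside point is the left one
        apply aux_sep_endpoint_symm
        apply aux_sep_circle (show pr < qr by linarith)
        · apply aux_circle_in_nested h12 hp hq1
          apply aux_in_disk hy (by linarith : (0:ℝ) < (x2 - x1) / 2)
          have : (x2 - rm - (x1 + x2) / 2) ^ 2 = (r1 - rm) ^ 2 := by
            rw [hrm, hr1]; ring_nf
          rw [this]
          rw [hrm, hr1] at hA ⊢
          nlinarith
        · apply aux_circle_out_right (show pr < qr by linarith)
          rw [hW, aux_pt_re]
          linarith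
    rintro p q (⟨⟨qr, rfl, hq1, hq2⟩, hq⟩ | ⟨hq, ⟨qr, rfl, hq1, hq2⟩⟩)
    · exact hkey qr q hq1 hq2 hq
    · exact aux_sep_endpoint_symm (hkey qr p hq1 hq2 hq)

/-- Core geometric lemma, configuration with `∞` and reals `x1 < x2 < x3`. -/
theorem aux_core_inf (x1 x2 x3 : ℝ) (h12 : x1 < x2) (h23 : x2 < x3) :
    (∃ x y : ℝ, ∃ hy : 0 < y, ∀ p q : OnePoint ℝ,
      ((p ∈ aux_Scc x1 x2 ∧ q ∈ aux_SgeInf x3) ∨ (p ∈ aux_SgeInf x3 ∧ q ∈ aux_Scc x1 x2)) →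
        Separates p q (aux_pt x y hy) (aux_pt (x + 8 * y) y hy)) ∨
    (∃ x y : ℝ, ∃ hy : 0 < y, ∀ p q : OnePoint ℝ,
      ((p ∈ aux_Scc x2 x3 ∧ q ∈ aux_SleInf x1) ∨ (p ∈ aux_SleInf x1 ∧ q ∈ aux_Scc x2 x3)) →
        Separates p q (aux_pt x y hy) (aux_pt (x + 8 * y) y hy)) := by
  set r1 : ℝ := (x2 - x1) / 2 with hr1
  set rm : ℝ := (x3 - x2) / 2 with hrm
  have hr1p : 0 < r1 := by simp only [hr1]; linarith
  have hrmp : 0 < rm := by simp only [hrm]; linarith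
  by_cases hA : r1 ≤ rm
  · left
    have hy : 0 < r1 / 2 := by linarith
    refine ⟨x1 - r1, r1 / 2, hy, ?_⟩
    have hW : x1 - r1 + 8 * (r1 / 2) = x2 + r1 := by simp only [hr1]; ring
    have hkey : ∀ (pr : ℝ) (q : OnePoint ℝ), x1 ≤ pr → pr ≤ x2 → q ∈ aux_SgeInf x3 →
        Separates (pr : OnePoint ℝ) q
          (aux_pt (x1 - r1) (r1 / 2) hy) (aux_pt (x1 - r1 + 8 * (r1 / 2)) (r1 / 2) hy) := by
      intro pr q hp1 hp2 hq
      rcases hq with hq | ⟨qr, rfl, hq⟩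
      · rw [hq]
        apply aux_sep_line
        · rw [aux_pt_re]; linarith
        · rw [hW, aux_pt_re]; linarith
      · have hpq : pr < qr := by linarith
        apply aux_sep_swap
        apply aux_sep_circle hpq
        · rw [hW]
          apply aux_circle_in_nested h23 hp2 hq
          apply aux_in_disk hy (by linarith : (0:ℝ) < (x3 - x2) / 2)
          have : (x2 + r1 - (x2 + x3) / 2) ^ 2 = (r1 - rm) ^ 2 := by
            rw [hrm]; ring_nf
          rw [this]
          rw [hrm] at hA ⊢
          nlinarith
        · apply aux_circle_out_left hpq
          rw [aux_pt_re]
          linarith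
    rintro p q (⟨⟨pr, rfl, hp1, hp2⟩, hq⟩ | ⟨hq, ⟨pr, rfl, hp1, hp2⟩⟩)
    · exact hkey pr q hp1 hp2 hq
    · exact aux_sep_endpoint_symm (hkey pr p hp1 hp2 hq)
  · right
    push_neg at hA
    have hy : 0 < rm / 2 := by linarith
    refine ⟨x2 - rm, rm / 2, hy, ?_⟩
    have hW : x2 - rm + 8 * (rm / 2) = x3 + rm := by simp only [hrm]; ring
    have hkey : ∀ (qr : ℝ) (p : OnePoint ℝ), x2 ≤ qr → qr ≤ x3 → p ∈ aux_SleInf x1 →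
        Separates (qr : OnePoint ℝ) p
          (aux_pt (x2 - rm) (rm / 2) hy) (aux_pt (x2 - rm + 8 * (rm / 2)) (rm / 2) hy) := by
      intro qr p hq1 hq2 hp
      rcases hp with hp | ⟨pr, rfl, hp⟩
      · rw [hp]
        apply aux_sep_line
        · rw [aux_pt_re]; linarith
        · rw [hW, aux_pt_re]; linarith
      · apply aux_sep_endpoint_symm
        apply aux_sep_circle (show pr < qr by linarith)
        · apply aux_circle_in_nested h12 hp hq1
          apply aux_in_disk hy (by linarith : (0:ℝ) < (x2 - x1) / 2)
          have : (x2 - rm - (x1 + x2) / 2) ^ 2 = (r1 - rm) ^ 2 := by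
            rw [hrm, hr1]; ring_nf
          rw [this]
          rw [hrm, hr1] at hA ⊢
          nlinarith
        · apply aux_circle_out_right (show pr < qr by linarith)
          rw [hW, aux_pt_re]
          linarith
    rintro p q (⟨⟨qr, rfl, hq1, hq2⟩, hq⟩ | ⟨hq, ⟨qr, rfl, hq1, hq2⟩⟩)
    · exact hkey qr q hq1 hq2 hq
    · exact aux_sep_endpoint_symm (hkey qr p hq1 hq2 hq)

theorem aux_branch_bound (lamP lamM : MeasuredLamination) {CP CM : ℝ}
    (hCP : 0 ≤ CP) (hCM : 0 ≤ CM)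
    (hBP : ∀ z w : UpperHalfPlane, dist z w ≤ 1 → interNum lamP z w ≤ ENNReal.ofReal CP)
    (hBM : ∀ z w : UpperHalfPlane, dist z w ≤ 1 → interNum lamM z w ≤ ENNReal.ofReal CM)
    (A B : Set (OnePoint ℝ)) (x y : ℝ) (hy : 0 < y)
    (h : ∀ p q : OnePoint ℝ, p ∈ A → q ∈ B →
      Separates p q (aux_pt x y hy) (aux_pt (x + 8 * y) y hy)) :
    lamP.μ (A ×ˢ B) + lamM.μ (A ×ˢ B) ≤ ENNReal.ofReal (15 * CP + 15 * CM) := by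
  have hS : ∀ pq : OnePoint ℝ × OnePoint ℝ, pq ∈ A ×ˢ B →
      Separates pq.1 pq.2 (aux_pt x y hy) (aux_pt (x + 8 * y) y hy) := by
    rintro ⟨p, q⟩ ⟨hp, hq⟩
    exact h p q hp hq
  calc lamP.μ (A ×ˢ B) + lamM.μ (A ×ˢ B)
      ≤ ENNReal.ofReal (15 * CP) + ENNReal.ofReal (15 * CM) := by
        gcongr
        · exact aux_chain_bound lamP hCP hBP x y hy _ hS
        · exact aux_chain_bound lamM hCM hBM x y hy _ hS
    _ = ENNReal.ofReal (15 * CP + 15 * CM) := by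
        rw [← ENNReal.ofReal_add (by positivity) (by positivity)]

/-- Witness property for a pairing of arcs `S, T`. -/
def aux_W (S T : Set (OnePoint ℝ)) : Prop :=
  ∃ x y : ℝ, ∃ hy : 0 < y, ∀ p q : OnePoint ℝ,
    ((p ∈ S ∧ q ∈ T) ∨ (p ∈ T ∧ q ∈ S)) →
      Separates p q (aux_pt x y hy) (aux_pt (x + 8 * y) y hy)

def aux_P (A B S T : Set (OnePoint ℝ)) : Prop := (A = S ∧ B = T) ∨ (A = T ∧ B = S)

theorem aux_pair_bound (lamP lamM : MeasuredLamination) {CP CM : ℝ}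
    (hCP : 0 ≤ CP) (hCM : 0 ≤ CM)
    (hBP : ∀ z w : UpperHalfPlane, dist z w ≤ 1 → interNum lamP z w ≤ ENNReal.ofReal CP)
    (hBM : ∀ z w : UpperHalfPlane, dist z w ≤ 1 → interNum lamM z w ≤ ENNReal.ofReal CM)
    {S T A B : Set (OnePoint ℝ)} (hP : aux_P A B S T) (hw : aux_W S T) :
    lamP.μ (A ×ˢ B) + lamM.μ (A ×ˢ B) ≤ ENNReal.ofReal (15 * CP + 15 * CM) := by
  obtain ⟨x, y, hy, h⟩ := hw
  rcases hP with ⟨hA, hB⟩ | ⟨hA, hB⟩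
  · rw [hA, hB]
    exact aux_branch_bound lamP lamM hCP hCM hBP hBM S T x y hy
      (fun p q hp hq => h p q (Or.inl ⟨hp, hq⟩))
  · rw [hA, hB]
    exact aux_branch_bound lamP lamM hCP hCM hBP hBM T S x y hy
      (fun p q hp hq => h p q (Or.inr ⟨hp, hq⟩))

theorem aux_finish (lamP lamM : MeasuredLamination) {CP CM : ℝ}
    (hCP : 0 ≤ CP) (hCM : 0 ≤ CM)
    (hBP : ∀ z w : UpperHalfPlane, dist z w ≤ 1 → interNum lamP z w ≤ ENNReal.ofReal CP)
    (hBM : ∀ z w : UpperHalfPlane, dist z w ≤ 1 → interNum lamM z w ≤ ENNReal.ofReal CM)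
    {S1 T1 S2 T2 Iab Icd Iac Ibd : Set (OnePoint ℝ)}
    (hcore : aux_W S1 T1 ∨ aux_W S2 T2)
    (hconf : (aux_P Iab Icd S1 T1 ∧ aux_P Iac Ibd S2 T2) ∨
             (aux_P Iab Icd S2 T2 ∧ aux_P Iac Ibd S1 T1)) :
    min (lamP.μ (Iab ×ˢ Icd) + lamM.μ (Iab ×ˢ Icd))
        (lamP.μ (Iac ×ˢ Ibd) + lamM.μ (Iac ×ˢ Ibd))
      ≤ ENNReal.ofReal (15 * CP + 15 * CM) := by
  rcases hconf with ⟨h1, h2⟩ | ⟨h1, h2⟩ <;> rcases hcore with hw | hw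
  · exact le_trans (min_le_left _ _) (aux_pair_bound lamP lamM hCP hCM hBP hBM h1 hw)
  · exact le_trans (min_le_right _ _) (aux_pair_bound lamP lamM hCP hCM hBP hBM h2 hw)
  · exact le_trans (min_le_right _ _) (aux_pair_bound lamP lamM hCP hCM hBP hBM h2 hw)
  · exact le_trans (min_le_left _ _) (aux_pair_bound lamP lamM hCP hCM hBP hBM h1 hw)

/-! Membership helpers for `arcCcw`. -/

theorem aux_mem_cc {s t c : ℝ} (hst : s ≤ t) (h1 : s ≤ c) (h2 : c ≤ t) :
    (c : OnePoint ℝ) ∈ arcCcw (s : OnePoint ℝ) (t : OnePoint ℝ) := by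
  rw [aux_arcCcw_cc hst]; exact ⟨c, rfl, h1, h2⟩

theorem aux_mem_wrap_coe {s t c : ℝ} (hts : t < s) (h : s ≤ c ∨ c ≤ t) :
    (c : OnePoint ℝ) ∈ arcCcw (s : OnePoint ℝ) (t : OnePoint ℝ) := by
  rw [aux_arcCcw_wrap hts]; exact Or.inr ⟨c, rfl, h⟩

theorem aux_mem_wrap_infty {s t : ℝ} (hts : t < s) :
    OnePoint.infty ∈ arcCcw (s : OnePoint ℝ) (t : OnePoint ℝ) := by
  rw [aux_arcCcw_wrap hts]; exact Or.inl rfl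

theorem aux_mem_ci_coe {s c : ℝ} (h : s ≤ c) :
    (c : OnePoint ℝ) ∈ arcCcw (s : OnePoint ℝ) OnePoint.infty := by
  rw [aux_arcCcw_ci]; exact Or.inr ⟨c, rfl, h⟩

theorem aux_mem_ic_coe {t c : ℝ} (h : c ≤ t) :
    (c : OnePoint ℝ) ∈ arcCcw OnePoint.infty (t : OnePoint ℝ) := by
  rw [aux_arcCcw_ic]; exact Or.inr ⟨c, rfl, h⟩

/-! Pin wrappers producing the `aux_S*` sets. -/

theorem aux_pin_cc {s t : ℝ} (hst : s < t) {u : OnePoint ℝ} {A : Set (OnePoint ℝ)}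
    (hX : A = arcCcw (s : OnePoint ℝ) (t : OnePoint ℝ) ∨
          A = arcCcw (t : OnePoint ℝ) (s : OnePoint ℝ))
    (hu : u ∉ A) (huW : u ∈ arcCcw (t : OnePoint ℝ) (s : OnePoint ℝ)) :
    A = aux_Scc s t :=
  aux_arc_pin_cc hst hX hu huW

theorem aux_pin_wrap {s t : ℝ} (hst : s < t) {u : OnePoint ℝ} {A : Set (OnePoint ℝ)}
    (hX : A = arcCcw (s : OnePoint ℝ) (t : OnePoint ℝ) ∨
          A = arcCcw (t : OnePoint ℝ) (s : OnePoint ℝ))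
    (hu : u ∉ A) (huC : u ∈ arcCcw (s : OnePoint ℝ) (t : OnePoint ℝ)) :
    A = aux_Swrap s t :=
  aux_arc_pin_wrap hst hX hu huC

theorem aux_pin_ge {s : ℝ} {u : OnePoint ℝ} {A : Set (OnePoint ℝ)}
    (hX : A = arcCcw (s : OnePoint ℝ) OnePoint.infty ∨
          A = arcCcw OnePoint.infty (s : OnePoint ℝ))
    (hu : u ∉ A) (huL : u ∈ arcCcw OnePoint.infty (s : OnePoint ℝ)) :
    A = aux_SgeInf s :=
  aux_arc_pin_ci hX hu huL

theorem aux_pin_le {s : ℝ} {u : OnePoint ℝ} {A : Set (OnePoint ℝ)}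
    (hX : A = arcCcw (s : OnePoint ℝ) OnePoint.infty ∨
          A = arcCcw OnePoint.infty (s : OnePoint ℝ))
    (hu : u ∉ A) (huR : u ∈ arcCcw (s : OnePoint ℝ) OnePoint.infty) :
    A = aux_SleInf s :=
  aux_arc_pin_ic hX hu huR

theorem aux_some_eq_coe (x : ℝ) : (Option.some x : OnePoint ℝ) = (x : OnePoint ℝ) := rfl

theorem aux_none_eq_infty : (none : OnePoint ℝ) = OnePoint.infty := rfl

/-- For two bounded measured geodesic laminations `λ₊, λ₋` on ℍ²
there is a constant `C > 0` such that for any pairwise distinct ideal points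
`a,b,c,d` with `g(a,b)` disjoint from `g(c,d)` and `g(a,c)` disjoint from `g(b,d)`,
`min (λ₊(I_ab × I_cd) + λ₋(I_ab × I_cd), λ₊(I_ac × I_bd) + λ₋(I_ac × I_bd)) ≤ C`,
where `I_xy` is the closed arc from `x` to `y` avoiding the other two points. -/
theorem bounded_laminations_min_mass_le
    (lamP lamM : MeasuredLamination) (hP : lamP.Bounded) (hM : lamM.Bounded) :
    ∃ C : ℝ, 0 < C ∧
      ∀ a b c d : OnePoint ℝ,
        a ≠ b → a ≠ c → a ≠ d → b ≠ c → b ≠ d → c ≠ d →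
        Disjoint (geodesic a b) (geodesic c d) →
        Disjoint (geodesic a c) (geodesic b d) →
        ∀ Iab Icd Iac Ibd : Set (OnePoint ℝ),
          IsArcAvoiding a b c d Iab → IsArcAvoiding c d a b Icd →
          IsArcAvoiding a c b d Iac → IsArcAvoiding b d a c Ibd →
          min (lamP.μ (Iab ×ˢ Icd) + lamM.μ (Iab ×ˢ Icd))
              (lamP.μ (Iac ×ˢ Ibd) + lamM.μ (Iac ×ˢ Ibd)) ≤ ENNReal.ofReal C := by
  obtain ⟨CP, hCP, hBP⟩ := hP
  obtain ⟨CM, hCM, hBM⟩ := hM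
  refine ⟨15 * CP + 15 * CM, by positivity, ?_⟩
  intro a b c d hab hac had hbc hbd hcd hD1 hD2 Iab Icd Iac Ibd hIab hIcd hIac hIbd
  obtain ⟨hIab1, hIab2, hIab3⟩ := hIab
  obtain ⟨hIcd1, hIcd2, hIcd3⟩ := hIcd
  obtain ⟨hIac1, hIac2, hIac3⟩ := hIac
  obtain ⟨hIbd1, hIbd2, hIbd3⟩ := hIbd
  rcases a with _ | a
  · rcases b with _ | b
    · exact absurd rfl hab
    rcases c with _ | c
    · exact absurd rfl hac
    rcases d with _ | d
    · exact absurd rfl had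
    simp only [aux_some_eq_coe, aux_none_eq_infty] at *
    have nbc : b ≠ c := fun h => hbc (congrArg _ h)
    have nbd : b ≠ d := fun h => hbd (congrArg _ h)
    have ncd : c ≠ d := fun h => hcd (congrArg _ h)
    rcases lt_or_gt_of_ne nbc with obc | obc
    · -- b < c
      rcases lt_or_gt_of_ne nbd with obd | obd
      · -- b < d
        rcases lt_or_gt_of_ne ncd with ocd | ocd
        · -- c < d
          exfalso
          have hD := hD2
          rw [aux_geodesic_symm OnePoint.infty (c : OnePoint ℝ)] at hD
          exact aux_not_disjoint_ci (by linarith) (by linarith) hD.symm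
        · -- d < c
          have eIab : Iab = aux_SleInf b := aux_pin_le hIab1.symm hIab2 (aux_mem_ci_coe (by linarith))
          have eIcd : Icd = aux_Scc d c := aux_pin_cc (by linarith) hIcd1.symm hIcd2 (aux_mem_wrap_infty (by linarith))
          have eIac : Iac = aux_SgeInf c := aux_pin_ge hIac1.symm hIac2 (aux_mem_ic_coe (by linarith))
          have eIbd : Ibd = aux_Scc b d := aux_pin_cc (by linarith) hIbd1 hIbd2 (aux_mem_wrap_infty (by linarith))
          exact aux_finish lamP lamM hCP.le hCM.le hBP hBM (aux_core_inf b d c (by linarith) (by linarith)) (Or.inr ⟨Or.inr ⟨eIab, eIcd⟩, Or.inr ⟨eIac, eIbd⟩⟩)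
      · -- d < b
        rcases lt_or_gt_of_ne ncd with ocd | ocd
        · -- c < d
          exfalso
          linarith
        · -- d < c
          exfalso
          have hD := hD1
          rw [aux_geodesic_symm OnePoint.infty (b : OnePoint ℝ)] at hD
          rw [aux_geodesic_symm (c : OnePoint ℝ) (d : OnePoint ℝ)] at hD
          exact aux_not_disjoint_ci (by linarith) (by linarith) hD.symm
    · -- c < b
      rcases lt_or_gt_of_ne nbd with obd | obd
      · -- b < d
        rcases lt_or_gt_of_ne ncd with ocd | ocd
        · -- c < d
          exfalso
          have hD := hD1
          rw [aux_geodesic_symm OnePoint.infty (b : OnePoint ℝ)] at hD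
          exact aux_not_disjoint_ci (by linarith) (by linarith) hD.symm
        · -- d < c
          exfalso
          linarith
      · -- d < b
        rcases lt_or_gt_of_ne ncd with ocd | ocd
        · -- c < d
          have eIab : Iab = aux_SgeInf b := aux_pin_ge hIab1.symm hIab2 (aux_mem_ic_coe (by linarith))
          have eIcd : Icd = aux_Scc c d := aux_pin_cc (by linarith) hIcd1 hIcd2 (aux_mem_wrap_infty (by linarith))
          have eIac : Iac = aux_SleInf c := aux_pin_le hIac1.symm hIac2 (aux_mem_ci_coe (by linarith))
          have eIbd : Ibd = aux_Scc d b := aux_pin_cc (by linarith) hIbd1.symm hIbd2 (aux_mem_wrap_infty (by linarith))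
          exact aux_finish lamP lamM hCP.le hCM.le hBP hBM (aux_core_inf c d b (by linarith) (by linarith)) (Or.inl ⟨Or.inr ⟨eIab, eIcd⟩, Or.inr ⟨eIac, eIbd⟩⟩)
        · -- d < c
          exfalso
          have hD := hD2
          rw [aux_geodesic_symm OnePoint.infty (c : OnePoint ℝ)] at hD
          rw [aux_geodesic_symm (b : OnePoint ℝ) (d : OnePoint ℝ)] at hD
          exact aux_not_disjoint_ci (by linarith) (by linarith) hD.symm
  rcases b with _ | b
  · rcases c with _ | c
    · exact absurd rfl hbc
    rcases d with _ | d
    · exact absurd rfl hbd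
    simp only [aux_some_eq_coe, aux_none_eq_infty] at *
    have nac : a ≠ c := fun h => hac (congrArg _ h)
    have nad : a ≠ d := fun h => had (congrArg _ h)
    have ncd : c ≠ d := fun h => hcd (congrArg _ h)
    rcases lt_or_gt_of_ne nac with oac | oac
    · -- a < c
      rcases lt_or_gt_of_ne nad with oad | oad
      · -- a < d
        rcases lt_or_gt_of_ne ncd with ocd | ocd
        · -- c < d
          have eIab : Iab = aux_SleInf a := aux_pin_le hIab1 hIab2 (aux_mem_ci_coe (by linarith))
          have eIcd : Icd = aux_Scc c d := aux_pin_cc (by linarith) hIcd1 hIcd3 (aux_mem_wrap_infty (by linarith))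
          have eIac : Iac = aux_Scc a c := aux_pin_cc (by linarith) hIac1 hIac2 (aux_mem_wrap_infty (by linarith))
          have eIbd : Ibd = aux_SgeInf d := aux_pin_ge hIbd1.symm hIbd2 (aux_mem_ic_coe (by linarith))
          exact aux_finish lamP lamM hCP.le hCM.le hBP hBM (aux_core_inf a c d (by linarith) (by linarith)) (Or.inr ⟨Or.inr ⟨eIab, eIcd⟩, Or.inl ⟨eIac, eIbd⟩⟩)
        · -- d < c
          exfalso
          have hD := hD2
          rw [aux_geodesic_symm OnePoint.infty (d : OnePoint ℝ)] at hD
          exact aux_not_disjoint_ci (by linarith) (by linarith) hD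
      · -- d < a
        rcases lt_or_gt_of_ne ncd with ocd | ocd
        · -- c < d
          exfalso
          linarith
        · -- d < c
          exfalso
          have hD := hD1
          rw [aux_geodesic_symm (c : OnePoint ℝ) (d : OnePoint ℝ)] at hD
          exact aux_not_disjoint_ci (by linarith) (by linarith) hD.symm
    · -- c < a
      rcases lt_or_gt_of_ne nad with oad | oad
      · -- a < d
        rcases lt_or_gt_of_ne ncd with ocd | ocd
        · -- c < d
          exfalso
          have hD := hD1
          exact aux_not_disjoint_ci (by linarith) (by linarith) hD.symm
        · -- d < c
          exfalso
          linarith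
      · -- d < a
        rcases lt_or_gt_of_ne ncd with ocd | ocd
        · -- c < d
          exfalso
          have hD := hD2
          rw [aux_geodesic_symm OnePoint.infty (d : OnePoint ℝ)] at hD
          rw [aux_geodesic_symm (a : OnePoint ℝ) (c : OnePoint ℝ)] at hD
          exact aux_not_disjoint_ci (by linarith) (by linarith) hD
        · -- d < c
          have eIab : Iab = aux_SgeInf a := aux_pin_ge hIab1 hIab2 (aux_mem_ic_coe (by linarith))
          have eIcd : Icd = aux_Scc d c := aux_pin_cc (by linarith) hIcd1.symm hIcd3 (aux_mem_wrap_infty (by linarith))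
          have eIac : Iac = aux_Scc c a := aux_pin_cc (by linarith) hIac1.symm hIac2 (aux_mem_wrap_infty (by linarith))
          have eIbd : Ibd = aux_SleInf d := aux_pin_le hIbd1.symm hIbd2 (aux_mem_ci_coe (by linarith))
          exact aux_finish lamP lamM hCP.le hCM.le hBP hBM (aux_core_inf d c a (by linarith) (by linarith)) (Or.inl ⟨Or.inr ⟨eIab, eIcd⟩, Or.inl ⟨eIac, eIbd⟩⟩)
  rcases c with _ | c
  · rcases d with _ | d
    · exact absurd rfl hcd
    simp only [aux_some_eq_coe, aux_none_eq_infty] at *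
    have nab : a ≠ b := fun h => hab (congrArg _ h)
    have nad : a ≠ d := fun h => had (congrArg _ h)
    have nbd : b ≠ d := fun h => hbd (congrArg _ h)
    rcases lt_or_gt_of_ne nab with oab | oab
    · -- a < b
      rcases lt_or_gt_of_ne nad with oad | oad
      · -- a < d
        rcases lt_or_gt_of_ne nbd with obd | obd
        · -- b < d
          have eIab : Iab = aux_Scc a b := aux_pin_cc (by linarith) hIab1 hIab2 (aux_mem_wrap_infty (by linarith))
          have eIcd : Icd = aux_SgeInf d := aux_pin_ge hIcd1.symm hIcd2 (aux_mem_ic_coe (by linarith))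
          have eIac : Iac = aux_SleInf a := aux_pin_le hIac1 hIac2 (aux_mem_ci_coe (by linarith))
          have eIbd : Ibd = aux_Scc b d := aux_pin_cc (by linarith) hIbd1 hIbd3 (aux_mem_wrap_infty (by linarith))
          exact aux_finish lamP lamM hCP.le hCM.le hBP hBM (aux_core_inf a b d (by linarith) (by linarith)) (Or.inl ⟨Or.inl ⟨eIab, eIcd⟩, Or.inr ⟨eIac, eIbd⟩⟩)
        · -- d < b
          exfalso
          have hD := hD1
          rw [aux_geodesic_symm OnePoint.infty (d : OnePoint ℝ)] at hD
          exact aux_not_disjoint_ci (by linarith) (by linarith) hD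
      · -- d < a
        rcases lt_or_gt_of_ne nbd with obd | obd
        · -- b < d
          exfalso
          linarith
        · -- d < b
          exfalso
          have hD := hD2
          rw [aux_geodesic_symm (b : OnePoint ℝ) (d : OnePoint ℝ)] at hD
          exact aux_not_disjoint_ci (by linarith) (by linarith) hD.symm
    · -- b < a
      rcases lt_or_gt_of_ne nad with oad | oad
      · -- a < d
        rcases lt_or_gt_of_ne nbd with obd | obd
        · -- b < d
          exfalso
          have hD := hD2
          exact aux_not_disjoint_ci (by linarith) (by linarith) hD.symm
        · -- d < b
          exfalso
          linarith
      · -- d < a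
        rcases lt_or_gt_of_ne nbd with obd | obd
        · -- b < d
          exfalso
          have hD := hD1
          rw [aux_geodesic_symm OnePoint.infty (d : OnePoint ℝ)] at hD
          rw [aux_geodesic_symm (a : OnePoint ℝ) (b : OnePoint ℝ)] at hD
          exact aux_not_disjoint_ci (by linarith) (by linarith) hD
        · -- d < b
          have eIab : Iab = aux_Scc b a := aux_pin_cc (by linarith) hIab1.symm hIab2 (aux_mem_wrap_infty (by linarith))
          have eIcd : Icd = aux_SleInf d := aux_pin_le hIcd1.symm hIcd2 (aux_mem_ci_coe (by linarith))
          have eIac : Iac = aux_SgeInf a := aux_pin_ge hIac1 hIac2 (aux_mem_ic_coe (by linarith))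
          have eIbd : Ibd = aux_Scc d b := aux_pin_cc (by linarith) hIbd1.symm hIbd3 (aux_mem_wrap_infty (by linarith))
          exact aux_finish lamP lamM hCP.le hCM.le hBP hBM (aux_core_inf d b a (by linarith) (by linarith)) (Or.inr ⟨Or.inl ⟨eIab, eIcd⟩, Or.inr ⟨eIac, eIbd⟩⟩)
  rcases d with _ | d
  ·
    simp only [aux_some_eq_coe, aux_none_eq_infty] at *
    have nab : a ≠ b := fun h => hab (congrArg _ h)
    have nac : a ≠ c := fun h => hac (congrArg _ h)
    have nbc : b ≠ c := fun h => hbc (congrArg _ h)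
    rcases lt_or_gt_of_ne nab with oab | oab
    · -- a < b
      rcases lt_or_gt_of_ne nac with oac | oac
      · -- a < c
        rcases lt_or_gt_of_ne nbc with obc | obc
        · -- b < c
          exfalso
          have hD := hD2
          exact aux_not_disjoint_ci (by linarith) (by linarith) hD
        · -- c < b
          exfalso
          have hD := hD1
          exact aux_not_disjoint_ci (by linarith) (by linarith) hD
      · -- c < a
        rcases lt_or_gt_of_ne nbc with obc | obc
        · -- b < c
          exfalso
          linarith
        · -- c < b
          have eIab : Iab = aux_Scc a b := aux_pin_cc (by linarith) hIab1 hIab3 (aux_mem_wrap_infty (by linarith))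
          have eIcd : Icd = aux_SleInf c := aux_pin_le hIcd1 hIcd2 (aux_mem_ci_coe (by linarith))
          have eIac : Iac = aux_Scc c a := aux_pin_cc (by linarith) hIac1.symm hIac3 (aux_mem_wrap_infty (by linarith))
          have eIbd : Ibd = aux_SgeInf b := aux_pin_ge hIbd1 hIbd2 (aux_mem_ic_coe (by linarith))
          exact aux_finish lamP lamM hCP.le hCM.le hBP hBM (aux_core_inf c a b (by linarith) (by linarith)) (Or.inr ⟨Or.inl ⟨eIab, eIcd⟩, Or.inl ⟨eIac, eIbd⟩⟩)
    · -- b < a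
      rcases lt_or_gt_of_ne nac with oac | oac
      · -- a < c
        rcases lt_or_gt_of_ne nbc with obc | obc
        · -- b < c
          have eIab : Iab = aux_Scc b a := aux_pin_cc (by linarith) hIab1.symm hIab3 (aux_mem_wrap_infty (by linarith))
          have eIcd : Icd = aux_SgeInf c := aux_pin_ge hIcd1 hIcd2 (aux_mem_ic_coe (by linarith))
          have eIac : Iac = aux_Scc a c := aux_pin_cc (by linarith) hIac1 hIac3 (aux_mem_wrap_infty (by linarith))
          have eIbd : Ibd = aux_SleInf b := aux_pin_le hIbd1 hIbd2 (aux_mem_ci_coe (by linarith))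
          exact aux_finish lamP lamM hCP.le hCM.le hBP hBM (aux_core_inf b a c (by linarith) (by linarith)) (Or.inl ⟨Or.inl ⟨eIab, eIcd⟩, Or.inl ⟨eIac, eIbd⟩⟩)
        · -- c < b
          exfalso
          linarith
      · -- c < a
        rcases lt_or_gt_of_ne nbc with obc | obc
        · -- b < c
          exfalso
          have hD := hD1
          rw [aux_geodesic_symm (a : OnePoint ℝ) (b : OnePoint ℝ)] at hD
          exact aux_not_disjoint_ci (by linarith) (by linarith) hD
        · -- c < b
          exfalso
          have hD := hD2
          rw [aux_geodesic_symm (a : OnePoint ℝ) (c : OnePoint ℝ)] at hD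
          exact aux_not_disjoint_ci (by linarith) (by linarith) hD
  simp only [aux_some_eq_coe, aux_none_eq_infty] at *
  have nab : a ≠ b := fun h => hab (congrArg _ h)
  have nac : a ≠ c := fun h => hac (congrArg _ h)
  have nad : a ≠ d := fun h => had (congrArg _ h)
  have nbc : b ≠ c := fun h => hbc (congrArg _ h)
  have nbd : b ≠ d := fun h => hbd (congrArg _ h)
  have ncd : c ≠ d := fun h => hcd (congrArg _ h)
  rcases lt_or_gt_of_ne nab with oab | oab
  · -- a < b
    rcases lt_or_gt_of_ne nac with oac | oac
    · -- a < c
      rcases lt_or_gt_of_ne nad with oad | oad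
      · -- a < d
        rcases lt_or_gt_of_ne nbc with obc | obc
        · -- b < c
          rcases lt_or_gt_of_ne nbd with obd | obd
          · -- b < d
            rcases lt_or_gt_of_ne ncd with ocd | ocd
            · -- c < d
              exfalso
              have hD := hD2
              exact aux_not_disjoint_cc (by linarith) (by linarith) (by linarith) hD
            · -- d < c
              have eIab : Iab = aux_Scc a b := aux_pin_cc (by linarith) hIab1 hIab2 (aux_mem_wrap_coe (by linarith) (Or.inl (by linarith)))
              have eIcd : Icd = aux_Scc d c := aux_pin_cc (by linarith) hIcd1.symm hIcd2 (aux_mem_wrap_coe (by linarith) (Or.inr (by linarith)))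
              have eIac : Iac = aux_Swrap a c := aux_pin_wrap (by linarith) hIac1 hIac2 (aux_mem_cc (by linarith) (by linarith) (by linarith))
              have eIbd : Ibd = aux_Scc b d := aux_pin_cc (by linarith) hIbd1 hIbd2 (aux_mem_wrap_coe (by linarith) (Or.inr (by linarith)))
              exact aux_finish lamP lamM hCP.le hCM.le hBP hBM (aux_core_allreal a b d c (by linarith) (by linarith) (by linarith)) (Or.inl ⟨Or.inl ⟨eIab, eIcd⟩, Or.inr ⟨eIac, eIbd⟩⟩)
          · -- d < b
            rcases lt_or_gt_of_ne ncd with ocd | ocd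
            · -- c < d
              exfalso
              linarith
            · -- d < c
              exfalso
              have hD := hD1
              rw [aux_geodesic_symm (c : OnePoint ℝ) (d : OnePoint ℝ)] at hD
              exact aux_not_disjoint_cc (by linarith) (by linarith) (by linarith) hD
        · -- c < b
          rcases lt_or_gt_of_ne nbd with obd | obd
          · -- b < d
            rcases lt_or_gt_of_ne ncd with ocd | ocd
            · -- c < d
              exfalso
              have hD := hD1
              exact aux_not_disjoint_cc (by linarith) (by linarith) (by linarith) hD
            · -- d < c
              exfalso
              linarith
          · -- d < b
            rcases lt_or_gt_of_ne ncd with ocd | ocd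
            · -- c < d
              have eIab : Iab = aux_Swrap a b := aux_pin_wrap (by linarith) hIab1 hIab2 (aux_mem_cc (by linarith) (by linarith) (by linarith))
              have eIcd : Icd = aux_Scc c d := aux_pin_cc (by linarith) hIcd1 hIcd2 (aux_mem_wrap_coe (by linarith) (Or.inr (by linarith)))
              have eIac : Iac = aux_Scc a c := aux_pin_cc (by linarith) hIac1 hIac2 (aux_mem_wrap_coe (by linarith) (Or.inl (by linarith)))
              have eIbd : Ibd = aux_Scc d b := aux_pin_cc (by linarith) hIbd1.symm hIbd2 (aux_mem_wrap_coe (by linarith) (Or.inr (by linarith)))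
              exact aux_finish lamP lamM hCP.le hCM.le hBP hBM (aux_core_allreal a c d b (by linarith) (by linarith) (by linarith)) (Or.inr ⟨Or.inr ⟨eIab, eIcd⟩, Or.inl ⟨eIac, eIbd⟩⟩)
            · -- d < c
              exfalso
              have hD := hD2
              rw [aux_geodesic_symm (b : OnePoint ℝ) (d : OnePoint ℝ)] at hD
              exact aux_not_disjoint_cc (by linarith) (by linarith) (by linarith) hD
      · -- d < a
        rcases lt_or_gt_of_ne nbc with obc | obc
        · -- b < c
          rcases lt_or_gt_of_ne nbd with obd | obd
          · -- b < d
            rcases lt_or_gt_of_ne ncd with ocd | ocd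
            · -- c < d
              exfalso
              linarith
            · -- d < c
              exfalso
              linarith
          · -- d < b
            rcases lt_or_gt_of_ne ncd with ocd | ocd
            · -- c < d
              exfalso
              linarith
            · -- d < c
              exfalso
              have hD := hD2
              rw [aux_geodesic_symm (b : OnePoint ℝ) (d : OnePoint ℝ)] at hD
              exact aux_not_disjoint_cc (by linarith) (by linarith) (by linarith) hD.symm
        · -- c < b
          rcases lt_or_gt_of_ne nbd with obd | obd
          · -- b < d
            rcases lt_or_gt_of_ne ncd with ocd | ocd
            · -- c < d
              exfalso
              linarith
            · -- d < c
              exfalso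
              linarith
          · -- d < b
            rcases lt_or_gt_of_ne ncd with ocd | ocd
            · -- c < d
              exfalso
              linarith
            · -- d < c
              exfalso
              have hD := hD1
              rw [aux_geodesic_symm (c : OnePoint ℝ) (d : OnePoint ℝ)] at hD
              exact aux_not_disjoint_cc (by linarith) (by linarith) (by linarith) hD.symm
    · -- c < a
      rcases lt_or_gt_of_ne nad with oad | oad
      · -- a < d
        rcases lt_or_gt_of_ne nbc with obc | obc
        · -- b < c
          rcases lt_or_gt_of_ne nbd with obd | obd
          · -- b < d
            rcases lt_or_gt_of_ne ncd with ocd | ocd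
            · -- c < d
              exfalso
              linarith
            · -- d < c
              exfalso
              linarith
          · -- d < b
            rcases lt_or_gt_of_ne ncd with ocd | ocd
            · -- c < d
              exfalso
              linarith
            · -- d < c
              exfalso
              linarith
        · -- c < b
          rcases lt_or_gt_of_ne nbd with obd | obd
          · -- b < d
            rcases lt_or_gt_of_ne ncd with ocd | ocd
            · -- c < d
              have eIab : Iab = aux_Scc a b := aux_pin_cc (by linarith) hIab1 hIab2 (aux_mem_wrap_coe (by linarith) (Or.inr (by linarith)))
              have eIcd : Icd = aux_Swrap c d := aux_pin_wrap (by linarith) hIcd1 hIcd2 (aux_mem_cc (by linarith) (by linarith) (by linarith))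
              have eIac : Iac = aux_Scc c a := aux_pin_cc (by linarith) hIac1.symm hIac2 (aux_mem_wrap_coe (by linarith) (Or.inl (by linarith)))
              have eIbd : Ibd = aux_Scc b d := aux_pin_cc (by linarith) hIbd1 hIbd2 (aux_mem_wrap_coe (by linarith) (Or.inr (by linarith)))
              exact aux_finish lamP lamM hCP.le hCM.le hBP hBM (aux_core_allreal c a b d (by linarith) (by linarith) (by linarith)) (Or.inr ⟨Or.inl ⟨eIab, eIcd⟩, Or.inl ⟨eIac, eIbd⟩⟩)
            · -- d < c
              exfalso
              linarith
          · -- d < b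
            rcases lt_or_gt_of_ne ncd with ocd | ocd
            · -- c < d
              exfalso
              have hD := hD1
              exact aux_not_disjoint_cc (by linarith) (by linarith) (by linarith) hD.symm
            · -- d < c
              exfalso
              linarith
      · -- d < a
        rcases lt_or_gt_of_ne nbc with obc | obc
        · -- b < c
          rcases lt_or_gt_of_ne nbd with obd | obd
          · -- b < d
            rcases lt_or_gt_of_ne ncd with ocd | ocd
            · -- c < d
              exfalso
              linarith
            · -- d < c
              exfalso
              linarith
          · -- d < b
            rcases lt_or_gt_of_ne ncd with ocd | ocd
            · -- c < d
              exfalso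
              linarith
            · -- d < c
              exfalso
              linarith
        · -- c < b
          rcases lt_or_gt_of_ne nbd with obd | obd
          · -- b < d
            rcases lt_or_gt_of_ne ncd with ocd | ocd
            · -- c < d
              exfalso
              linarith
            · -- d < c
              exfalso
              linarith
          · -- d < b
            rcases lt_or_gt_of_ne ncd with ocd | ocd
            · -- c < d
              exfalso
              have hD := hD2
              rw [aux_geodesic_symm (a : OnePoint ℝ) (c : OnePoint ℝ)] at hD
              rw [aux_geodesic_symm (b : OnePoint ℝ) (d : OnePoint ℝ)] at hD
              exact aux_not_disjoint_cc (by linarith) (by linarith) (by linarith) hD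
            · -- d < c
              have eIab : Iab = aux_Scc a b := aux_pin_cc (by linarith) hIab1 hIab2 (aux_mem_wrap_coe (by linarith) (Or.inr (by linarith)))
              have eIcd : Icd = aux_Scc d c := aux_pin_cc (by linarith) hIcd1.symm hIcd2 (aux_mem_wrap_coe (by linarith) (Or.inl (by linarith)))
              have eIac : Iac = aux_Scc c a := aux_pin_cc (by linarith) hIac1.symm hIac2 (aux_mem_wrap_coe (by linarith) (Or.inl (by linarith)))
              have eIbd : Ibd = aux_Swrap d b := aux_pin_wrap (by linarith) hIbd1.symm hIbd2 (aux_mem_cc (by linarith) (by linarith) (by linarith))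
              exact aux_finish lamP lamM hCP.le hCM.le hBP hBM (aux_core_allreal d c a b (by linarith) (by linarith) (by linarith)) (Or.inl ⟨Or.inr ⟨eIab, eIcd⟩, Or.inl ⟨eIac, eIbd⟩⟩)
  · -- b < a
    rcases lt_or_gt_of_ne nac with oac | oac
    · -- a < c
      rcases lt_or_gt_of_ne nad with oad | oad
      · -- a < d
        rcases lt_or_gt_of_ne nbc with obc | obc
        · -- b < c
          rcases lt_or_gt_of_ne nbd with obd | obd
          · -- b < d
            rcases lt_or_gt_of_ne ncd with ocd | ocd
            · -- c < d
              have eIab : Iab = aux_Scc b a := aux_pin_cc (by linarith) hIab1.symm hIab2 (aux_mem_wrap_coe (by linarith) (Or.inl (by linarith)))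
              have eIcd : Icd = aux_Scc c d := aux_pin_cc (by linarith) hIcd1 hIcd2 (aux_mem_wrap_coe (by linarith) (Or.inr (by linarith)))
              have eIac : Iac = aux_Scc a c := aux_pin_cc (by linarith) hIac1 hIac2 (aux_mem_wrap_coe (by linarith) (Or.inr (by linarith)))
              have eIbd : Ibd = aux_Swrap b d := aux_pin_wrap (by linarith) hIbd1 hIbd2 (aux_mem_cc (by linarith) (by linarith) (by linarith))
              exact aux_finish lamP lamM hCP.le hCM.le hBP hBM (aux_core_allreal b a c d (by linarith) (by linarith) (by linarith)) (Or.inl ⟨Or.inl ⟨eIab, eIcd⟩, Or.inl ⟨eIac, eIbd⟩⟩)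
            · -- d < c
              exfalso
              have hD := hD2
              exact aux_not_disjoint_cc (by linarith) (by linarith) (by linarith) hD.symm
          · -- d < b
            rcases lt_or_gt_of_ne ncd with ocd | ocd
            · -- c < d
              exfalso
              linarith
            · -- d < c
              exfalso
              linarith
        · -- c < b
          rcases lt_or_gt_of_ne nbd with obd | obd
          · -- b < d
            rcases lt_or_gt_of_ne ncd with ocd | ocd
            · -- c < d
              exfalso
              linarith
            · -- d < c
              exfalso
              linarith
          · -- d < b
            rcases lt_or_gt_of_ne ncd with ocd | ocd
            · -- c < d
              exfalso
              linarith
            · -- d < c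
              exfalso
              linarith
      · -- d < a
        rcases lt_or_gt_of_ne nbc with obc | obc
        · -- b < c
          rcases lt_or_gt_of_ne nbd with obd | obd
          · -- b < d
            rcases lt_or_gt_of_ne ncd with ocd | ocd
            · -- c < d
              exfalso
              linarith
            · -- d < c
              exfalso
              have hD := hD1
              rw [aux_geodesic_symm (a : OnePoint ℝ) (b : OnePoint ℝ)] at hD
              rw [aux_geodesic_symm (c : OnePoint ℝ) (d : OnePoint ℝ)] at hD
              exact aux_not_disjoint_cc (by linarith) (by linarith) (by linarith) hD
          · -- d < b
            rcases lt_or_gt_of_ne ncd with ocd | ocd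
            · -- c < d
              exfalso
              linarith
            · -- d < c
              have eIab : Iab = aux_Scc b a := aux_pin_cc (by linarith) hIab1.symm hIab2 (aux_mem_wrap_coe (by linarith) (Or.inl (by linarith)))
              have eIcd : Icd = aux_Swrap d c := aux_pin_wrap (by linarith) hIcd1.symm hIcd2 (aux_mem_cc (by linarith) (by linarith) (by linarith))
              have eIac : Iac = aux_Scc a c := aux_pin_cc (by linarith) hIac1 hIac2 (aux_mem_wrap_coe (by linarith) (Or.inr (by linarith)))
              have eIbd : Ibd = aux_Scc d b := aux_pin_cc (by linarith) hIbd1.symm hIbd2 (aux_mem_wrap_coe (by linarith) (Or.inl (by linarith)))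
              exact aux_finish lamP lamM hCP.le hCM.le hBP hBM (aux_core_allreal d b a c (by linarith) (by linarith) (by linarith)) (Or.inr ⟨Or.inl ⟨eIab, eIcd⟩, Or.inr ⟨eIac, eIbd⟩⟩)
        · -- c < b
          rcases lt_or_gt_of_ne nbd with obd | obd
          · -- b < d
            rcases lt_or_gt_of_ne ncd with ocd | ocd
            · -- c < d
              exfalso
              linarith
            · -- d < c
              exfalso
              linarith
          · -- d < b
            rcases lt_or_gt_of_ne ncd with ocd | ocd
            · -- c < d
              exfalso
              linarith
            · -- d < c
              exfalso
              linarith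
    · -- c < a
      rcases lt_or_gt_of_ne nad with oad | oad
      · -- a < d
        rcases lt_or_gt_of_ne nbc with obc | obc
        · -- b < c
          rcases lt_or_gt_of_ne nbd with obd | obd
          · -- b < d
            rcases lt_or_gt_of_ne ncd with ocd | ocd
            · -- c < d
              exfalso
              have hD := hD1
              rw [aux_geodesic_symm (a : OnePoint ℝ) (b : OnePoint ℝ)] at hD
              exact aux_not_disjoint_cc (by linarith) (by linarith) (by linarith) hD
            · -- d < c
              exfalso
              linarith
          · -- d < b
            rcases lt_or_gt_of_ne ncd with ocd | ocd
            · -- c < d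
              exfalso
              linarith
            · -- d < c
              exfalso
              linarith
        · -- c < b
          rcases lt_or_gt_of_ne nbd with obd | obd
          · -- b < d
            rcases lt_or_gt_of_ne ncd with ocd | ocd
            · -- c < d
              exfalso
              have hD := hD2
              rw [aux_geodesic_symm (a : OnePoint ℝ) (c : OnePoint ℝ)] at hD
              exact aux_not_disjoint_cc (by linarith) (by linarith) (by linarith) hD
            · -- d < c
              exfalso
              linarith
          · -- d < b
            rcases lt_or_gt_of_ne ncd with ocd | ocd
            · -- c < d
              exfalso
              linarith
            · -- d < c
              exfalso
              linarith
      · -- d < a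
        rcases lt_or_gt_of_ne nbc with obc | obc
        · -- b < c
          rcases lt_or_gt_of_ne nbd with obd | obd
          · -- b < d
            rcases lt_or_gt_of_ne ncd with ocd | ocd
            · -- c < d
              exfalso
              have hD := hD2
              rw [aux_geodesic_symm (a : OnePoint ℝ) (c : OnePoint ℝ)] at hD
              exact aux_not_disjoint_cc (by linarith) (by linarith) (by linarith) hD.symm
            · -- d < c
              have eIab : Iab = aux_Swrap b a := aux_pin_wrap (by linarith) hIab1.symm hIab2 (aux_mem_cc (by linarith) (by linarith) (by linarith))
              have eIcd : Icd = aux_Scc d c := aux_pin_cc (by linarith) hIcd1.symm hIcd2 (aux_mem_wrap_coe (by linarith) (Or.inl (by linarith)))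
              have eIac : Iac = aux_Scc c a := aux_pin_cc (by linarith) hIac1.symm hIac2 (aux_mem_wrap_coe (by linarith) (Or.inr (by linarith)))
              have eIbd : Ibd = aux_Scc b d := aux_pin_cc (by linarith) hIbd1 hIbd2 (aux_mem_wrap_coe (by linarith) (Or.inl (by linarith)))
              exact aux_finish lamP lamM hCP.le hCM.le hBP hBM (aux_core_allreal b d c a (by linarith) (by linarith) (by linarith)) (Or.inr ⟨Or.inr ⟨eIab, eIcd⟩, Or.inr ⟨eIac, eIbd⟩⟩)
          · -- d < b
            rcases lt_or_gt_of_ne ncd with ocd | ocd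
            · -- c < d
              exfalso
              linarith
            · -- d < c
              exfalso
              have hD := hD1
              rw [aux_geodesic_symm (a : OnePoint ℝ) (b : OnePoint ℝ)] at hD
              rw [aux_geodesic_symm (c : OnePoint ℝ) (d : OnePoint ℝ)] at hD
              exact aux_not_disjoint_cc (by linarith) (by linarith) (by linarith) hD.symm
        · -- c < b
          rcases lt_or_gt_of_ne nbd with obd | obd
          · -- b < d
            rcases lt_or_gt_of_ne ncd with ocd | ocd
            · -- c < d
              exfalso
              have hD := hD1
              rw [aux_geodesic_symm (a : OnePoint ℝ) (b : OnePoint ℝ)] at hD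
              exact aux_not_disjoint_cc (by linarith) (by linarith) (by linarith) hD.symm
            · -- d < c
              exfalso
              linarith
          · -- d < b
            rcases lt_or_gt_of_ne ncd with ocd | ocd
            · -- c < d
              have eIab : Iab = aux_Scc b a := aux_pin_cc (by linarith) hIab1.symm hIab2 (aux_mem_wrap_coe (by linarith) (Or.inr (by linarith)))
              have eIcd : Icd = aux_Scc c d := aux_pin_cc (by linarith) hIcd1 hIcd2 (aux_mem_wrap_coe (by linarith) (Or.inl (by linarith)))
              have eIac : Iac = aux_Swrap c a := aux_pin_wrap (by linarith) hIac1.symm hIac2 (aux_mem_cc (by linarith) (by linarith) (by linarith))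
              have eIbd : Ibd = aux_Scc d b := aux_pin_cc (by linarith) hIbd1.symm hIbd2 (aux_mem_wrap_coe (by linarith) (Or.inl (by linarith)))
              exact aux_finish lamP lamM hCP.le hCM.le hBP hBM (aux_core_allreal c d b a (by linarith) (by linarith) (by linarith)) (Or.inl ⟨Or.inr ⟨eIab, eIcd⟩, Or.inr ⟨eIac, eIbd⟩⟩)
            · -- d < c
              exfalso
              have hD := hD2
              rw [aux_geodesic_symm (a : OnePoint ℝ) (c : OnePoint ℝ)] at hD
              rw [aux_geodesic_symm (b : OnePoint ℝ) (d : OnePoint ℝ)] at hD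
              exact aux_not_disjoint_cc (by linarith) (by linarith) (by linarith) hD.symm


end
end

section
/- For every K > 1 and every ε ∈ (0,1) there exists K′ > 1 with the following property. Let u : ℝP¹ → ℝP¹ be an orientation-preserving homeomorphism (a homeomorphism preserving the standard cyclic order) such that cr(u(a),u(b),u(c),u(d)) ∈ [−K, −1/K] for every 4-tuple (a,b,c,d) of pairwise distinct points in symmetric position. Then cr(u(a),u(b),u(c),u(d)) ∈ [−K′, −1/K′] for every 4-tuple (a,b,c,d) of pairwise distinct points in ε-symmetric position; in particular, the restriction of u to any finite subset F ⊆ ℝP¹ is (K′,ε)-quasi-symmetric. -/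
/- ℝP¹ = ℝ ∪ {∞} (one-point compactification), cross-ratio, cyclic order,
   discrete quasi-symmetric maps. -/

noncomputable section
open Set

/-- The real value of a point of `ℝP¹ = ℝ ∪ {∞}` (junk value `0` at `∞`). -/
def rv (x : OnePoint ℝ) : ℝ := Option.getD x 0

open Classical in
/-- Cross-ratio `cr(a,b,c,d) = ((a−b)(c−d))/((a−d)(c−b))` on `ℝP¹ = ℝ ∪ {∞}`,
extended by the usual limiting conventions when one point is `∞`; in particular
`cr(−1,0,1,∞) = −1`. -/
def crossRatio (a b c d : OnePoint ℝ) : ℝ :=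
  if a = OnePoint.infty then (rv c - rv d) / (rv c - rv b)
  else if b = OnePoint.infty then (rv c - rv d) / (rv a - rv d)
  else if c = OnePoint.infty then (rv a - rv b) / (rv a - rv d)
  else if d = OnePoint.infty then (rv a - rv b) / (rv c - rv b)
  else ((rv a - rv b) * (rv c - rv d)) / ((rv a - rv d) * (rv c - rv b))

/-- `a, b, c, d` are pairwise distinct. -/
def Distinct4 (a b c d : OnePoint ℝ) : Prop :=
  a ≠ b ∧ a ≠ c ∧ a ≠ d ∧ b ≠ c ∧ b ≠ d ∧ c ≠ d

/-- The standard cyclic betweenness on `ℝP¹`: `b` lies on the closed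
counterclockwise arc from `a` to `c`. -/
def CBtw (a b c : OnePoint ℝ) : Prop := b ∈ arcCcw a c

/-- `f` weakly preserves the standard cyclic order on the subset `F` of `ℝP¹`
(an "increasing" map). -/
def IncreasingOn (F : Set (OnePoint ℝ)) (f : OnePoint ℝ → OnePoint ℝ) : Prop :=
  ∀ a ∈ F, ∀ b ∈ F, ∀ c ∈ F, CBtw a b c → CBtw (f a) (f b) (f c)

/-- `f` weakly preserves the standard cyclic order of `ℝP¹`. -/
def CyclicMono (f : OnePoint ℝ → OnePoint ℝ) : Prop :=
  ∀ a b c : OnePoint ℝ, CBtw a b c → CBtw (f a) (f b) (f c)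

/-- `v` is `(K,ε)`-quasi-symmetric on the (finite) set `F`: it is increasing on `F`
and sends 4-tuples of points of `F` in `ε`-symmetric position
(`cr ∈ [−1−ε, −1+ε]`) to 4-tuples with cross-ratio in `[−K, −1/K]`. -/
def IsQSOn (K ε : ℝ) (F : Set (OnePoint ℝ)) (v : OnePoint ℝ → OnePoint ℝ) : Prop :=
  IncreasingOn F v ∧
  ∀ a ∈ F, ∀ b ∈ F, ∀ c ∈ F, ∀ d ∈ F, Distinct4 a b c d →
    crossRatio a b c d ∈ Set.Icc (-1 - ε) (-1 + ε) →
    crossRatio (v a) (v b) (v c) (v d) ∈ Set.Icc (-K) (-1 / K)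

namespace CRDev

/-- Lift a point of `ℝP¹` to homogeneous coordinates. -/
def lift' : OnePoint ℝ → ℝ × ℝ
  | Option.none => (1, 0)
  | Option.some x => (x, 1)

@[simp] lemma lift'_infty : lift' (OnePoint.infty) = (1, 0) := rfl
@[simp] lemma lift'_coe (x : ℝ) : lift' (x : OnePoint ℝ) = (x, 1) := rfl
@[simp] lemma rv_coe (x : ℝ) : rv (x : OnePoint ℝ) = x := rfl
@[simp] lemma rv_infty : rv (OnePoint.infty) = 0 := rfl

def d2 (X Y : ℝ × ℝ) : ℝ := X.1 * Y.2 - X.2 * Y.1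

def act (p q r s : ℝ) (X : ℝ × ℝ) : ℝ × ℝ := (p * X.1 + q * X.2, r * X.1 + s * X.2)

def ofVec (X : ℝ × ℝ) : OnePoint ℝ :=
  if X.2 = 0 then OnePoint.infty else ((X.1 / X.2 : ℝ) : OnePoint ℝ)

def mob (p q r s : ℝ) (x : OnePoint ℝ) : OnePoint ℝ := ofVec (act p q r s (lift' x))

lemma ofVec_mul (c : ℝ) (hc : c ≠ 0) (X : ℝ × ℝ) : ofVec (c * X.1, c * X.2) = ofVec X := by
  unfold ofVec
  rcases eq_or_ne X.2 0 with h | h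
  · simp [h]
  · simp only [mul_eq_zero, hc, h, or_self, if_false, if_neg h]
    rw [mul_div_mul_left _ _ hc]

lemma lift'_ofVec (X : ℝ × ℝ) (hX : X ≠ 0) : ∃ c : ℝ, c ≠ 0 ∧ lift' (ofVec X) = (c * X.1, c * X.2) := by
  rcases eq_or_ne X.2 0 with h | h
  · have h1 : X.1 ≠ 0 := by
      intro h1; exact hX (Prod.ext h1 h)
    exact ⟨1 / X.1, by simpa using h1, by simp [ofVec, h, one_div, inv_mul_cancel₀ h1]⟩
  · exact ⟨1 / X.2, by simpa using h, by simp [ofVec, h, div_eq_mul_inv, mul_comm, inv_mul_cancel₀ h]⟩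

@[simp] lemma ofVec_lift' (x : OnePoint ℝ) : ofVec (lift' x) = x := by
  cases x with
  | infty => simp [ofVec]
  | coe y => simp [ofVec]

lemma lift'_ne_zero (x : OnePoint ℝ) : lift' x ≠ 0 := by
  cases x with
  | infty => simp [lift', Prod.ext_iff]
  | coe y => simp [lift', Prod.ext_iff]

lemma act_ne_zero {p q r s : ℝ} (hd : p * s - q * r ≠ 0) {X : ℝ × ℝ} (hX : X ≠ 0) :
    act p q r s X ≠ 0 := by
  intro h
  have h1 : p * X.1 + q * X.2 = 0 := congrArg Prod.fst h
  have h2 : r * X.1 + s * X.2 = 0 := congrArg Prod.snd h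
  apply hX
  have e1 : (p * s - q * r) * X.1 = 0 := by linear_combination s * h1 - q * h2
  have e2 : (p * s - q * r) * X.2 = 0 := by linear_combination p * h2 - r * h1
  exact Prod.ext (by rcases mul_eq_zero.1 e1 with h|h; exact absurd h hd; exact h)
    (by rcases mul_eq_zero.1 e2 with h|h; exact absurd h hd; exact h)

lemma act_mul (p q r s c : ℝ) (X : ℝ × ℝ) :
    act p q r s (c * X.1, c * X.2) = (c * (act p q r s X).1, c * (act p q r s X).2) := by
  simp [act]; constructor <;> ring

lemma act_act (p q r s p' q' r' s' : ℝ) (X : ℝ × ℝ) :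
    act p q r s (act p' q' r' s' X) =
      act (p * p' + q * r') (p * q' + q * s') (r * p' + s * r') (r * q' + s * s') X := by
  simp [act]; constructor <;> ring

lemma d2_act (p q r s : ℝ) (X Y : ℝ × ℝ) :
    d2 (act p q r s X) (act p q r s Y) = (p * s - q * r) * d2 X Y := by
  simp [act, d2]; ring

lemma d2_mul (c c' : ℝ) (X Y : ℝ × ℝ) :
    d2 (c * X.1, c * X.2) (c' * Y.1, c' * Y.2) = c * c' * d2 X Y := by
  simp [d2]; ring

/-- The key computation: the lift of a Möbius image is a nonzero multiple of the
matrix acting on the lift. -/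
lemma lift'_mob {p q r s : ℝ} (hd : p * s - q * r ≠ 0) (x : OnePoint ℝ) :
    ∃ c : ℝ, c ≠ 0 ∧ lift' (mob p q r s x) =
      (c * (act p q r s (lift' x)).1, c * (act p q r s (lift' x)).2) :=
  lift'_ofVec _ (act_ne_zero hd (lift'_ne_zero x))

lemma mob_mob {p q r s p' q' r' s' : ℝ} (hd' : p' * s' - q' * r' ≠ 0) (x : OnePoint ℝ) :
    mob p q r s (mob p' q' r' s' x) =
      mob (p * p' + q * r') (p * q' + q * s') (r * p' + s * r') (r * q' + s * s') x := by
  obtain ⟨c, hc, hl⟩ := lift'_mob hd' x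
  show ofVec (act p q r s (lift' (mob p' q' r' s' x))) = _
  rw [hl, act_mul, ofVec_mul c hc, act_act]
  rfl

lemma mob_id {c : ℝ} (hc : c ≠ 0) (x : OnePoint ℝ) : mob c 0 0 c x = x := by
  unfold mob
  have : act c 0 0 c (lift' x) = (c * (lift' x).1, c * (lift' x).2) := by simp [act]
  rw [this, ofVec_mul c hc, ofVec_lift']

lemma mob_adj_left {p q r s : ℝ} (hd : p * s - q * r ≠ 0) (x : OnePoint ℝ) :
    mob s (-q) (-r) p (mob p q r s x) = x := by
  rw [mob_mob hd]
  have e1 : s * p + -q * r = p * s - q * r := by ring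
  have e2 : s * q + -q * s = 0 := by ring
  have e3 : -r * p + p * r = 0 := by ring
  have e4 : -r * q + p * s = p * s - q * r := by ring
  rw [e1, e2, e3, e4, mob_id hd]

lemma mob_adj_right {p q r s : ℝ} (hd : p * s - q * r ≠ 0) (x : OnePoint ℝ) :
    mob p q r s (mob s (-q) (-r) p x) = x := by
  have hd' : s * p - (-q) * (-r) ≠ 0 := by
    intro h; apply hd; linear_combination h
  rw [mob_mob hd']
  have e1 : p * s + q * -r = p * s - q * r := by ring
  have e2 : p * -q + q * p = 0 := by ring
  have e3 : r * s + s * -r = 0 := by ring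
  have e4 : r * -q + s * p = p * s - q * r := by ring
  rw [e1, e2, e3, e4, mob_id hd]

lemma mob_injective {p q r s : ℝ} (hd : p * s - q * r ≠ 0) :
    Function.Injective (mob p q r s) := by
  intro x y h
  have := congrArg (mob s (-q) (-r) p) h
  rwa [mob_adj_left hd, mob_adj_left hd] at this


@[simp] lemma d2_eq_zero_iff (x y : OnePoint ℝ) : d2 (lift' x) (lift' y) = 0 ↔ x = y := by
  cases x with
  | infty => cases y with
    | infty => simp [d2]
    | coe b => simp [d2]
  | coe a => cases y with
    | infty => simp [d2]
    | coe b => simp [d2, sub_eq_zero, eq_comm]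

lemma crossRatio_eq_d2 {a b c d : OnePoint ℝ} (h : Distinct4 a b c d) :
    crossRatio a b c d =
      (d2 (lift' a) (lift' b) * d2 (lift' c) (lift' d)) /
        (d2 (lift' a) (lift' d) * d2 (lift' c) (lift' b)) := by
  obtain ⟨hab, hac, had, hbc, hbd, hcd⟩ := h
  cases a with
  | infty =>
    cases b with
    | infty => exact absurd rfl hab
    | coe b => cases c with
      | infty => exact absurd rfl hac
      | coe c => cases d with
        | infty => exact absurd rfl had
        | coe d => simp [crossRatio, d2]
  | coe a =>
    cases b with
    | infty => cases c with
      | infty => exact absurd rfl hbc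
      | coe c => cases d with
        | infty => exact absurd rfl hbd
        | coe d =>
          simp only [crossRatio, d2, OnePoint.coe_ne_infty, lift'_coe, lift'_infty,
            rv_coe, reduceIte, OnePoint.infty_ne_coe]
          rw [show (a:ℝ)*0 - 1*1 = -1 by ring, show (c:ℝ)*0 - 1*1 = -1 by ring,
            show (c:ℝ)*1 - 1*d = c - d by ring, show (a:ℝ)*1 - 1*d = a - d by ring,
            neg_one_mul, mul_neg_one, neg_div_neg_eq]
    | coe b => cases c with
      | infty => cases d with
        | infty => exact absurd rfl hcd
        | coe d => simp [crossRatio, d2, OnePoint.coe_ne_infty]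
      | coe c => cases d with
        | infty =>
          simp only [crossRatio, d2, OnePoint.coe_ne_infty, lift'_coe, lift'_infty,
            rv_coe, reduceIte, OnePoint.infty_ne_coe]
          rw [show (a:ℝ)*0 - 1*1 = -1 by ring, show (c:ℝ)*0 - 1*1 = -1 by ring,
            show (a:ℝ)*1 - 1*b = a - b by ring, show (c:ℝ)*1 - 1*b = c - b by ring,
            mul_neg_one, neg_one_mul, neg_div_neg_eq]
        | coe d => simp [crossRatio, d2, OnePoint.coe_ne_infty]

lemma distinct4_map {f : OnePoint ℝ → OnePoint ℝ} (hf : Function.Injective f)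
    {a b c d : OnePoint ℝ} (h : Distinct4 a b c d) : Distinct4 (f a) (f b) (f c) (f d) := by
  obtain ⟨h1, h2, h3, h4, h5, h6⟩ := h
  exact ⟨fun h => h1 (hf h), fun h => h2 (hf h), fun h => h3 (hf h),
    fun h => h4 (hf h), fun h => h5 (hf h), fun h => h6 (hf h)⟩

lemma crossRatio_mob {p q r s : ℝ} (hd : p * s - q * r ≠ 0) {a b c d : OnePoint ℝ}
    (h : Distinct4 a b c d) :
    crossRatio (mob p q r s a) (mob p q r s b) (mob p q r s c) (mob p q r s d) =
      crossRatio a b c d := by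
  obtain ⟨ca, hca, ea⟩ := lift'_mob hd a
  obtain ⟨cb, hcb, eb⟩ := lift'_mob hd b
  obtain ⟨cc', hcc, ec⟩ := lift'_mob hd c
  obtain ⟨cd', hcd, ed⟩ := lift'_mob hd d
  rw [crossRatio_eq_d2 (distinct4_map (mob_injective hd) h), crossRatio_eq_d2 h,
    ea, eb, ec, ed, d2_mul, d2_mul, d2_mul, d2_mul, d2_act, d2_act, d2_act, d2_act]
  set D := p * s - q * r
  set X := d2 (lift' a) (lift' b)
  set Y := d2 (lift' c) (lift' d)
  set Z := d2 (lift' a) (lift' d)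
  set W := d2 (lift' c) (lift' b)
  have hfac : ca * cb * cc' * cd' * (D * D) ≠ 0 := by
    exact mul_ne_zero (mul_ne_zero (mul_ne_zero (mul_ne_zero hca hcb) hcc) hcd)
      (mul_ne_zero hd hd)
  rw [show ca * cb * (D * X) * (cc' * cd' * (D * Y)) = ca * cb * cc' * cd' * (D * D) * (X * Y)
      by ring,
    show ca * cd' * (D * Z) * (cc' * cb * (D * W)) = ca * cb * cc' * cd' * (D * D) * (Z * W)
      by ring,
    mul_div_mul_left _ _ hfac]

def prod3 (a b c : OnePoint ℝ) : ℝ :=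
  d2 (lift' a) (lift' b) * d2 (lift' b) (lift' c) * d2 (lift' c) (lift' a)

lemma cbtw_iff (a b c : OnePoint ℝ) :
    CBtw a b c ↔ a = b ∨ b = c ∨ (a ≠ c ∧ 0 < prod3 a b c) := by
  cases a with
  | infty => cases b with
    | infty =>
      simp [CBtw, arcCcw, prod3, d2]
    | coe y => cases c with
      | infty =>
        simp [CBtw, arcCcw, prod3, d2]
      | coe z =>
        simp [CBtw, arcCcw, prod3, d2, OnePoint.coe_ne_infty, sub_eq_zero]
        exact ⟨fun h => h.eq_or_lt, fun h => h.elim le_of_eq le_of_lt⟩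
  | coe x => cases b with
    | infty => cases c with
      | infty =>
        simp [CBtw, arcCcw, prod3, d2]
      | coe z =>
        simp [CBtw, arcCcw, prod3, d2, OnePoint.coe_ne_infty, sub_eq_zero]
        exact fun h hh => absurd h (by simp [hh])
    | coe y => cases c with
      | infty =>
        simp [CBtw, arcCcw, prod3, d2, OnePoint.coe_ne_infty, sub_eq_zero]
        exact ⟨fun h => h.eq_or_lt, fun h => h.elim le_of_eq le_of_lt⟩
      | coe z =>
        simp [CBtw, arcCcw, prod3, d2, OnePoint.coe_ne_infty, sub_eq_zero]
        constructor
        · rintro (⟨h1, h2, h3⟩ | ⟨h1, h2 | h2⟩)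
          · rcases h2.eq_or_lt with h | h
            · exact Or.inl h
            · rcases h3.eq_or_lt with h' | h'
              · exact Or.inr (Or.inl h')
              · refine Or.inr (Or.inr ⟨ne_of_lt (lt_trans h h'), ?_⟩)
                have := mul_pos (mul_pos_of_neg_of_neg (show x - y < 0 by linarith)
                  (show y - z < 0 by linarith)) (show (0:ℝ) < z - x by linarith)
                linarith
          · rcases h2.eq_or_lt with h | h
            · exact Or.inl h
            · refine Or.inr (Or.inr ⟨ne_of_gt h1, ?_⟩)
              have := mul_pos_of_neg_of_neg
                (mul_neg_of_neg_of_pos (show x - y < 0 by linarith)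
                  (show (0:ℝ) < y - z by linarith)) (show z - x < 0 by linarith)
              linarith
          · rcases h2.eq_or_lt with h | h
            · exact Or.inr (Or.inl h)
            · refine Or.inr (Or.inr ⟨ne_of_gt h1, ?_⟩)
              have := mul_pos_of_neg_of_neg
                (mul_neg_of_pos_of_neg (show (0:ℝ) < x - y by linarith)
                  (show y - z < 0 by linarith)) (show z - x < 0 by linarith)
              linarith
        · rintro (h | h | ⟨h1, h2⟩)
          · subst h
            rcases le_or_gt x z with h | h
            · exact Or.inl ⟨h, le_refl x, h⟩
            · exact Or.inr ⟨h, Or.inl (le_refl x)⟩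
          · subst h
            rcases le_or_gt x y with h | h
            · exact Or.inl ⟨h, h, le_refl y⟩
            · exact Or.inr ⟨h, Or.inr (le_refl y)⟩
          · rcases le_or_gt x z with h | h
            · rcases le_or_gt x y with h' | h'
              · rcases le_or_gt y z with h'' | h''
                · exact Or.inl ⟨h, h', h''⟩
                · exact absurd h2 (by nlinarith [mul_neg_of_neg_of_pos (show x - y < 0 by linarith) (show (0:ℝ) < y - z by linarith)])
              · exact absurd h2 (by nlinarith [mul_neg_of_pos_of_neg (show (0:ℝ) < x - y by linarith) (show y - z < 0 by linarith)])
            · rcases le_or_gt x y with h' | h'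
              · exact Or.inr ⟨h, Or.inl h'⟩
              · rcases le_or_gt y z with h'' | h''
                · exact Or.inr ⟨h, Or.inr h''⟩
                · exact absurd h2 (by nlinarith [mul_pos (show (0:ℝ) < x - y by linarith) (show (0:ℝ) < y - z by linarith)])

def CyclicAnti (f : OnePoint ℝ → OnePoint ℝ) : Prop :=
  ∀ a b c : OnePoint ℝ, CBtw a b c → CBtw (f c) (f b) (f a)

lemma cbtw_self_left (x y : OnePoint ℝ) : CBtw x x y := (cbtw_iff x x y).2 (Or.inl rfl)

lemma cbtw_self_right (x y : OnePoint ℝ) : CBtw x y y := (cbtw_iff x y y).2 (Or.inr (Or.inl rfl))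

lemma d2_antisymm (X Y : ℝ × ℝ) : d2 X Y = - d2 Y X := by simp [d2]; ring

lemma prod3_mob {p q r s : ℝ} (hd : p * s - q * r ≠ 0) (a b c : OnePoint ℝ) :
    ∃ e : ℝ, 0 < e ∧ prod3 (mob p q r s a) (mob p q r s b) (mob p q r s c) =
      e * ((p * s - q * r) * (p * s - q * r) * (p * s - q * r)) * prod3 a b c := by
  obtain ⟨ca, hca, ea⟩ := lift'_mob hd a
  obtain ⟨cb, hcb, eb⟩ := lift'_mob hd b
  obtain ⟨cc', hcc, ec⟩ := lift'_mob hd c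
  refine ⟨(ca * cb * cc') * (ca * cb * cc'), mul_self_pos.2 (by
    exact mul_ne_zero (mul_ne_zero hca hcb) hcc), ?_⟩
  unfold prod3
  rw [ea, eb, ec, d2_mul, d2_mul, d2_mul, d2_act, d2_act, d2_act]
  ring

lemma cyclicMono_mob {p q r s : ℝ} (hd : 0 < p * s - q * r) :
    CyclicMono (mob p q r s) := by
  intro a b c h
  have hd' : p * s - q * r ≠ 0 := ne_of_gt hd
  rw [cbtw_iff] at h ⊢
  rcases h with h | h | ⟨hne, hpos⟩
  · exact Or.inl (by rw [h])
  · exact Or.inr (Or.inl (by rw [h]))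
  · refine Or.inr (Or.inr ⟨fun hh => hne (mob_injective hd' hh), ?_⟩)
    obtain ⟨e, he, hE⟩ := prod3_mob hd' a b c
    rw [hE]
    exact mul_pos (mul_pos he (mul_pos (mul_pos hd hd) hd)) hpos

lemma prod3_rev (a b c : OnePoint ℝ) : prod3 c b a = - prod3 a b c := by
  unfold prod3
  rw [d2_antisymm (lift' c) (lift' b), d2_antisymm (lift' b) (lift' a),
    d2_antisymm (lift' a) (lift' c)]
  ring

lemma cyclicAnti_mob {p q r s : ℝ} (hd : p * s - q * r < 0) :
    CyclicAnti (mob p q r s) := by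
  intro a b c h
  have hd' : p * s - q * r ≠ 0 := ne_of_lt hd
  rw [cbtw_iff] at h ⊢
  rcases h with h | h | ⟨hne, hpos⟩
  · exact Or.inr (Or.inl (by rw [h]))
  · exact Or.inl (by rw [h])
  · refine Or.inr (Or.inr ⟨fun hh => hne (mob_injective hd' hh.symm), ?_⟩)
    obtain ⟨e, he, hE⟩ := prod3_mob hd' c b a
    rw [hE, prod3_rev]
    have h3 : (p * s - q * r) * (p * s - q * r) * (p * s - q * r) < 0 :=
      mul_neg_of_pos_of_neg (mul_pos_of_neg_of_neg hd hd) hd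
    nlinarith [mul_pos (mul_pos he (neg_pos.2 h3)) hpos]

lemma cbtw_asymm {a b c : OnePoint ℝ} (hab : a ≠ b) (hbc : b ≠ c) (hac : a ≠ c)
    (h1 : CBtw a b c) (h2 : CBtw c b a) : False := by
  rw [cbtw_iff] at h1 h2
  rcases h1 with h | h | ⟨-, h1⟩
  · exact hab h
  · exact hbc h
  rcases h2 with h | h | ⟨-, h2⟩
  · exact hbc h.symm
  · exact hab h.symm
  rw [prod3_rev] at h2
  linarith

lemma exists_normalizing {a b d : OnePoint ℝ} (hab : a ≠ b) (had : a ≠ d) (hbd : b ≠ d) :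
    ∃ p q r s : ℝ, p * s - q * r ≠ 0 ∧ mob p q r s a = ((-1 : ℝ) : OnePoint ℝ) ∧
      mob p q r s b = ((0 : ℝ) : OnePoint ℝ) ∧ mob p q r s d = OnePoint.infty := by
  set A := lift' a with hA
  set B := lift' b with hB
  set Dv := lift' d with hD
  have nAB : d2 A B ≠ 0 := fun h => hab ((d2_eq_zero_iff a b).1 h)
  have nAD : d2 A Dv ≠ 0 := fun h => had ((d2_eq_zero_iff a d).1 h)
  have nBD : d2 B Dv ≠ 0 := fun h => hbd ((d2_eq_zero_iff b d).1 h)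
  set t : ℝ := - d2 A Dv / d2 A B with ht
  have htne : t ≠ 0 := div_ne_zero (neg_ne_zero.2 nAD) nAB
  refine ⟨t * B.2, -(t * B.1), Dv.2, -Dv.1, ?_, ?_, ?_, ?_⟩
  · have : t * B.2 * -Dv.1 - -(t * B.1) * Dv.2 = t * d2 B Dv := by simp [d2]; ring
    rw [this]
    exact mul_ne_zero htne nBD
  · have hact : act (t * B.2) (-(t * B.1)) Dv.2 (-Dv.1) A = (- d2 A Dv, d2 A Dv) := by
      have h1 : t * d2 A B = - d2 A Dv := div_mul_cancel₀ _ nAB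
      simp only [act, d2] at h1 ⊢
      rw [Prod.mk.injEq]
      exact ⟨by linear_combination h1, by ring⟩
    rw [mob, ← hA, hact, ofVec]
    simp only [nAD, if_false]
    norm_num [neg_div, div_self nAD]
  · have hact : act (t * B.2) (-(t * B.1)) Dv.2 (-Dv.1) B = (0, d2 B Dv) := by
      simp only [act, d2]
      rw [Prod.mk.injEq]
      exact ⟨by ring, by ring⟩
    rw [mob, ← hB, hact, ofVec]
    simp [nBD]
  · have hact : (act (t * B.2) (-(t * B.1)) Dv.2 (-Dv.1) Dv).2 = 0 := by
      simp only [act]; ring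
    rw [mob, ← hD, ofVec, if_pos hact]

lemma coe_rv {z : OnePoint ℝ} (hz : z ≠ OnePoint.infty) : ((rv z : ℝ) : OnePoint ℝ) = z := by
  cases z with
  | infty => exact absurd rfl hz
  | coe x => rfl

lemma cbtw_coe_coe_infty (x y : ℝ) : CBtw (x : OnePoint ℝ) (y : OnePoint ℝ) OnePoint.infty ↔ x ≤ y := by
  rw [cbtw_iff]
  simp [prod3, d2, OnePoint.coe_ne_infty, sub_pos]
  exact ⟨fun h => h.elim le_of_eq le_of_lt, fun h => h.eq_or_lt⟩

lemma crossRatio_cci (x y z : ℝ) :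
    crossRatio (x : OnePoint ℝ) (y : OnePoint ℝ) (z : OnePoint ℝ) OnePoint.infty = (x - y) / (z - y) := by
  simp [crossRatio, OnePoint.coe_ne_infty]

end CRDev

open CRDev
set_option maxHeartbeats 1000000

/-- For every `K > 1` and `ε ∈ (0,1)` there is `K′ > 1` such that
every orientation-preserving homeomorphism `u` of `ℝP¹` sending symmetric 4-tuples
(`cr = −1`) to 4-tuples with cross-ratio in `[−K, −1/K]` also sends `ε`-symmetric
4-tuples (`cr ∈ [−1−ε, −1+ε]`) to 4-tuples with cross-ratio in `[−K′, −1/K′]`;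
in particular the restriction of `u` to any finite subset `F ⊆ ℝP¹` is
`(K′,ε)`-quasi-symmetric. -/
theorem quasisymmetric_eps_symmetric_tuples
    (K : ℝ) (hK : 1 < K) (ε : ℝ) (hε : ε ∈ Set.Ioo (0 : ℝ) 1) :
    ∃ K' : ℝ, 1 < K' ∧
      ∀ u : OnePoint ℝ ≃ₜ OnePoint ℝ, CyclicMono u →
        (∀ a b c d : OnePoint ℝ, Distinct4 a b c d → crossRatio a b c d = -1 →
          crossRatio (u a) (u b) (u c) (u d) ∈ Set.Icc (-K) (-1 / K)) →
        ((∀ a b c d : OnePoint ℝ, Distinct4 a b c d →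
            crossRatio a b c d ∈ Set.Icc (-1 - ε) (-1 + ε) →
            crossRatio (u a) (u b) (u c) (u d) ∈ Set.Icc (-K') (-1 / K')) ∧
          ∀ F : Set (OnePoint ℝ), F.Finite → IsQSOn K' ε F u) := by
  obtain ⟨hε0, hε1⟩ := hε
  have h1ε : (0:ℝ) < 1 - ε := by linarith
  have hKpos : (0:ℝ) < K := by linarith
  obtain ⟨n, hn⟩ := pow_unbounded_of_one_lt (R := ℝ) (1/(1-ε)) one_lt_two
  have h1K : (1:ℝ) ≤ (1+K)^n := one_le_pow₀ (by linarith)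
  have hK'1 : 1 < K * (1+K)^n := by nlinarith
  have hK'pos : 0 < K * (1+K)^n := by linarith
  refine ⟨K * (1+K)^n, hK'1, fun u hu hsym => ?_⟩
  have main : ∀ a b c d : OnePoint ℝ, Distinct4 a b c d →
      crossRatio a b c d ∈ Set.Icc (-1 - ε) (-1 + ε) →
      crossRatio (u a) (u b) (u c) (u d) ∈ Set.Icc (-(K * (1+K)^n)) (-1 / (K * (1+K)^n)) := by
    intro a b c d hdist hcr
    obtain ⟨hab, hac, had, hbc, hbd, hcd⟩ := hdist
    have hdist : Distinct4 a b c d := ⟨hab, hac, had, hbc, hbd, hcd⟩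
    have huinj : Function.Injective u := u.injective
    obtain ⟨gp, gq, gr, gs, hgd, hga, hgb, hgdd⟩ := exists_normalizing hab had hbd
    obtain ⟨hp, hq, hr, hs, hhd, hha, hhb, hhdd⟩ :=
      exists_normalizing (a := u a) (b := u b) (d := u d)
        (fun hh => hab (huinj hh)) (fun hh => had (huinj hh)) (fun hh => hbd (huinj hh))
    have hgd' : gs * gp - -gq * -gr ≠ 0 := fun hh => hgd (by linear_combination hh)
    set g : OnePoint ℝ → OnePoint ℝ := mob gp gq gr gs with hg
    set gi : OnePoint ℝ → OnePoint ℝ := mob gs (-gq) (-gr) gp with hgi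
    set h : OnePoint ℝ → OnePoint ℝ := mob hp hq hr hs with hh
    set v : OnePoint ℝ → OnePoint ℝ := fun x => h (u (gi x)) with hv
    have hginv : ∀ x, gi (g x) = x := mob_adj_left hgd
    have hginv' : ∀ x, g (gi x) = x := mob_adj_right hgd
    have hvg : ∀ x, v (g x) = h (u x) := fun x => by rw [hv]; simp only [hginv]
    have hvinf : v OnePoint.infty = OnePoint.infty := by
      have hx := hvg d; rw [hgdd, hhdd] at hx; exact hx
    have hv0 : v ((0:ℝ) : OnePoint ℝ) = ((0:ℝ) : OnePoint ℝ) := by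
      have hx := hvg b; rw [hgb, hhb] at hx; exact hx
    have hvm1 : v ((-1:ℝ) : OnePoint ℝ) = ((-1:ℝ) : OnePoint ℝ) := by
      have hx := hvg a; rw [hga, hha] at hx; exact hx
    have hvinj : Function.Injective v := fun x y hxy =>
      mob_injective hgd' (huinj (mob_injective hhd hxy))
    have hm1ne0 : ((-1:ℝ) : OnePoint ℝ) ≠ ((0:ℝ) : OnePoint ℝ) := by simp
    have h0neinf : ((0:ℝ) : OnePoint ℝ) ≠ OnePoint.infty := OnePoint.coe_ne_infty 0
    have hm1neinf : ((-1:ℝ) : OnePoint ℝ) ≠ OnePoint.infty := OnePoint.coe_ne_infty (-1)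
    have h0 : CBtw ((-1:ℝ) : OnePoint ℝ) ((0:ℝ) : OnePoint ℝ) OnePoint.infty :=
      (cbtw_coe_coe_infty (-1) 0).2 (by norm_num)
    have hvmono : CyclicMono v := by
      rcases lt_or_gt_of_ne hgd with hgneg | hgpos <;>
        rcases lt_or_gt_of_ne hhd with hhneg | hhpos
      · -- both negative
        have hgneg' : gs * gp - -gq * -gr < 0 := by nlinarith [hgd']
        intro x y z hxyz
        exact cyclicAnti_mob hhneg _ _ _ (hu _ _ _ (cyclicAnti_mob hgneg' _ _ _ hxyz))
      · -- g negative, h positive : contradiction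
        exfalso
        have hgneg' : gs * gp - -gq * -gr < 0 := by nlinarith [hgd']
        have h1 := cyclicAnti_mob hgneg' _ _ _ h0
        rw [← hga, ← hgb, ← hgdd, ← hgi, hginv, hginv, hginv] at h1
        have h2 := cyclicMono_mob hhpos _ _ _ (hu _ _ _ h1)
        rw [← hh, hhdd, hhb, hha] at h2
        exact cbtw_asymm hm1ne0 h0neinf hm1neinf h0 h2
      · -- g positive, h negative : contradiction
        exfalso
        have hgpos' : 0 < gs * gp - -gq * -gr := by nlinarith [hgd']
        have h1 := cyclicMono_mob hgpos' _ _ _ h0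
        rw [← hga, ← hgb, ← hgdd, ← hgi, hginv, hginv, hginv] at h1
        have h2 := cyclicAnti_mob hhneg _ _ _ (hu _ _ _ h1)
        rw [← hh, hhdd, hhb, hha] at h2
        exact cbtw_asymm hm1ne0 h0neinf hm1neinf h0 h2
      · -- both positive
        have hgpos' : 0 < gs * gp - -gq * -gr := by nlinarith [hgd']
        intro x y z hxyz
        exact cyclicMono_mob hhpos _ _ _ (hu _ _ _ (cyclicMono_mob hgpos' _ _ _ hxyz))
    have hsymv : ∀ w x y z : OnePoint ℝ, Distinct4 w x y z → crossRatio w x y z = -1 →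
        crossRatio (v w) (v x) (v y) (v z) ∈ Set.Icc (-K) (-1/K) := by
      intro w x y z hD hcr1
      have hD' : Distinct4 (gi w) (gi x) (gi y) (gi z) := distinct4_map (mob_injective hgd') hD
      have e1 : crossRatio (gi w) (gi x) (gi y) (gi z) = -1 := by
        have e0 := crossRatio_mob hgd hD'
        rw [← hg] at e0
        rw [← e0, hginv', hginv', hginv', hginv']
        exact hcr1
      have hDu : Distinct4 (u (gi w)) (u (gi x)) (u (gi y)) (u (gi z)) :=
        distinct4_map huinj hD'
      have e2 := crossRatio_mob hhd hDu
      rw [← hh] at e2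
      have e3 : crossRatio (v w) (v x) (v y) (v z) =
          crossRatio (u (gi w)) (u (gi x)) (u (gi y)) (u (gi z)) := e2
      rw [e3]
      exact hsym _ _ _ _ hD' e1
    have hreal : ∀ x : ℝ, v ((x:ℝ) : OnePoint ℝ) ≠ OnePoint.infty := fun x hx =>
      OnePoint.coe_ne_infty x (hvinj (hx.trans hvinf.symm))
    have hmono : ∀ x y : ℝ, x ≤ y → rv (v ((x:ℝ) : OnePoint ℝ)) ≤ rv (v ((y:ℝ) : OnePoint ℝ)) := by
      intro x y hxy
      have h1 := hvmono _ _ _ ((cbtw_coe_coe_infty x y).2 hxy)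
      rw [hvinf, ← coe_rv (hreal x), ← coe_rv (hreal y)] at h1
      exact (cbtw_coe_coe_infty _ _).1 h1
    set t : ℤ → ℝ := fun j => rv (v ((((2:ℝ)^j : ℝ)) : OnePoint ℝ)) with htdef
    have hvt : ∀ j : ℤ, v (((2:ℝ)^j : ℝ) : OnePoint ℝ) = ((t j : ℝ) : OnePoint ℝ) :=
      fun j => (coe_rv (hreal _)).symm
    have htpos : ∀ j : ℤ, 0 < t j := by
      intro j
      have h2j : (0:ℝ) < 2^j := zpow_pos (by norm_num) j
      have h1 : 0 ≤ t j := by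
        have hx := hmono 0 (2^j) (le_of_lt h2j)
        rwa [hv0, rv_coe] at hx
      rcases h1.eq_or_lt with hx | hx
      · exfalso
        have he : v (((2:ℝ)^j : ℝ) : OnePoint ℝ) = v ((0:ℝ) : OnePoint ℝ) := by
          rw [hvt j, ← hx, hv0]
        have := hvinj he
        rw [OnePoint.coe_eq_coe] at this
        exact ne_of_gt h2j this
      · exact hx
    have htmono : ∀ j : ℤ, t j < t (j+1) := by
      intro j
      have h2j : (0:ℝ) < 2^j := zpow_pos (by norm_num) j
      have h2j1 : ((2:ℝ))^(j+1) = 2^j * 2 := zpow_add_one₀ (by norm_num) j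
      have hlt : (2:ℝ)^j < 2^(j+1) := by rw [h2j1]; linarith
      have hle : t j ≤ t (j+1) := hmono _ _ (le_of_lt hlt)
      rcases hle.eq_or_lt with hx | hx
      · exfalso
        have he : v (((2:ℝ)^j : ℝ) : OnePoint ℝ) = v (((2:ℝ)^(j+1) : ℝ) : OnePoint ℝ) := by
          rw [hvt j, hvt (j+1), hx]
        have := hvinj he
        rw [OnePoint.coe_eq_coe] at this
        exact ne_of_lt hlt this
      · exact hx
    have hstep : ∀ j : ℤ, t (j+1) ≤ (1+K) * t j := by
      intro j
      have h2j : (0:ℝ) < 2^j := zpow_pos (by norm_num) j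
      have h2j1 : ((2:ℝ))^(j+1) = 2^j * 2 := zpow_add_one₀ (by norm_num) j
      have hlt : (2:ℝ)^j < 2^(j+1) := by rw [h2j1]; linarith
      have hD : Distinct4 ((0:ℝ) : OnePoint ℝ) (((2:ℝ)^j : ℝ) : OnePoint ℝ)
          (((2:ℝ)^(j+1) : ℝ) : OnePoint ℝ) OnePoint.infty := by
        refine ⟨?_, ?_, OnePoint.coe_ne_infty 0, ?_, OnePoint.coe_ne_infty _,
          OnePoint.coe_ne_infty _⟩
        · simp only [ne_eq, OnePoint.coe_eq_coe]
          exact fun hh => ne_of_gt h2j hh.symm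
        · simp only [ne_eq, OnePoint.coe_eq_coe]
          exact fun hh => ne_of_gt (h2j.trans hlt) hh.symm
        · simp only [ne_eq, OnePoint.coe_eq_coe]
          exact ne_of_lt hlt
      have hcr1 : crossRatio ((0:ℝ) : OnePoint ℝ) (((2:ℝ)^j : ℝ) : OnePoint ℝ)
          (((2:ℝ)^(j+1) : ℝ) : OnePoint ℝ) OnePoint.infty = -1 := by
        rw [crossRatio_cci, h2j1]
        rw [div_eq_iff (by linarith)]
        ring
      have hmem := hsymv _ _ _ _ hD hcr1
      rw [hv0, hvt j, hvt (j+1), hvinf, crossRatio_cci] at hmem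
      have hdpos : 0 < t (j+1) - t j := by linarith [htmono j]
      have hm2 := hmem.2
      have hx := (div_le_div_iff₀ hdpos hKpos).1 hm2
      nlinarith [htpos j]
    have ht0K : t 0 ≤ K ∧ 1/K ≤ t 0 := by
      have hD : Distinct4 ((-1:ℝ) : OnePoint ℝ) ((0:ℝ) : OnePoint ℝ)
          ((1:ℝ) : OnePoint ℝ) OnePoint.infty :=
        ⟨by simp only [ne_eq, OnePoint.coe_eq_coe]; norm_num,
         by simp only [ne_eq, OnePoint.coe_eq_coe]; norm_num, OnePoint.coe_ne_infty _,
         by simp only [ne_eq, OnePoint.coe_eq_coe]; norm_num, OnePoint.coe_ne_infty _,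
          OnePoint.coe_ne_infty _⟩
      have hcr1 : crossRatio ((-1:ℝ) : OnePoint ℝ) ((0:ℝ) : OnePoint ℝ)
          ((1:ℝ) : OnePoint ℝ) OnePoint.infty = -1 := by
        rw [crossRatio_cci]; norm_num
      have hmem := hsymv _ _ _ _ hD hcr1
      have h1e : ((1:ℝ) : OnePoint ℝ) = (((2:ℝ)^(0:ℤ) : ℝ) : OnePoint ℝ) := by norm_num
      rw [hvm1, hv0, h1e, hvt 0, hvinf, crossRatio_cci] at hmem
      obtain ⟨hm1, hm2⟩ := hmem
      have ht0 := htpos 0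
      rw [show (-1 - 0 : ℝ) = -1 by ring, sub_zero, neg_div] at hm1 hm2
      rw [neg_div] at hm2
      have hm2' : 1/K ≤ 1/(t 0) := neg_le_neg_iff.1 hm2
      have hm1' : 1/(t 0) ≤ K := neg_le_neg_iff.1 hm1
      have e1 : K*(1/K) = 1 := by field_simp
      have e2 : t 0 * (1/(t 0)) = 1 := by field_simp
      have h3 := mul_le_mul_of_nonneg_left hm2' (le_of_lt (mul_pos ht0 hKpos))
      constructor
      · nlinarith [h3, e1, e2]
      · exact (one_div_le ht0 hKpos).1 hm1'
    have hup : ∀ m : ℕ, t (m : ℤ) ≤ (1+K)^m * t 0 := by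
      intro m
      induction m with
      | zero => simp
      | succ k ih =>
        have hcast : (((k+1 : ℕ)) : ℤ) = (k : ℤ) + 1 := by push_cast; ring
        rw [hcast]
        calc t ((k:ℤ)+1) ≤ (1+K) * t (k:ℤ) := hstep k
          _ ≤ (1+K) * ((1+K)^k * t 0) :=
            mul_le_mul_of_nonneg_left ih (by linarith)
          _ = (1+K)^(k+1) * t 0 := by ring
    have hdown : ∀ m : ℕ, t 0 ≤ (1+K)^m * t (-(m : ℤ)) := by
      intro m
      induction m with
      | zero => simp
      | succ k ih =>
        have h1 := hstep (-(k:ℤ)-1)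
        rw [show (-(k:ℤ)-1+1) = -(k:ℤ) by ring] at h1
        have hcast : (-((k+1 : ℕ) : ℤ)) = -(k:ℤ) - 1 := by push_cast; ring
        rw [hcast]
        have hpow : (0:ℝ) ≤ (1+K)^k := by positivity
        calc t 0 ≤ (1+K)^k * t (-(k:ℤ)) := ih
          _ ≤ (1+K)^k * ((1+K) * t (-(k:ℤ)-1)) := mul_le_mul_of_nonneg_left h1 hpow
          _ = (1+K)^(k+1) * t (-(k:ℤ)-1) := by ring
    -- the normalized image of c
    have hgcne : g c ≠ OnePoint.infty := fun hcc =>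
      hcd (mob_injective hgd (hcc.trans hgdd.symm))
    set S : ℝ := rv (g c) with hSdef
    have hgc : g c = ((S:ℝ) : OnePoint ℝ) := (coe_rv hgcne).symm
    have hcrS : crossRatio a b c d = (-1 - 0)/(S - 0) := by
      have e0 := crossRatio_mob hgd hdist
      rw [← hg] at e0
      rw [← e0, hga, hgb, hgc, hgdd, crossRatio_cci]
    have hup' : (-1)/S ≤ -1+ε := by
      have := hcr.2
      rw [hcrS, show (-1 - 0 : ℝ) = -1 by ring, sub_zero] at this
      exact this
    have hlow' : -1-ε ≤ (-1)/S := by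
      have := hcr.1
      rw [hcrS, show (-1 - 0 : ℝ) = -1 by ring, sub_zero] at this
      exact this
    have hSpos : 0 < S := by
      by_contra hS0
      push_neg at hS0
      rcases hS0.eq_or_lt with hx | hx
      · rw [hx, div_zero] at hup'; linarith
      · have : 0 < (-1)/S := div_pos_of_neg_of_neg (by norm_num) hx
        linarith
    have hSne : S ≠ 0 := ne_of_gt hSpos
    have hmul : (-1)/S * S = -1 := by field_simp
    have hS_ub : S * (1-ε) ≤ 1 := by nlinarith [mul_le_mul_of_nonneg_right hup' (le_of_lt hSpos)]
    have hS_lb : 1 ≤ S * (1+ε) := by nlinarith [mul_le_mul_of_nonneg_right hlow' (le_of_lt hSpos)]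
    have hpow_n : (0:ℝ) < 2^n := by positivity
    have hS_le : S ≤ 2^n := by
      have h2 : S ≤ 1/(1-ε) := by rw [le_div_iff₀ h1ε]; linarith
      linarith
    have h1eps_le : 1+ε ≤ 2^n := by
      have h3 : 1+ε ≤ 1/(1-ε) := by rw [le_div_iff₀ h1ε]; nlinarith
      linarith
    have hS_ge : (2:ℝ)^(-(n:ℤ)) ≤ S := by
      rw [zpow_neg, zpow_natCast]
      have h4 : 1/(1+ε) ≤ S := by
        rw [div_le_iff₀ (by linarith : (0:ℝ) < 1+ε)]; linarith
      have h5 : (2^n : ℝ)⁻¹ ≤ 1/(1+ε) := by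
        rw [inv_eq_one_div]
        exact one_div_le_one_div_of_le (by linarith) h1eps_le
      linarith
    -- bounds on T = rv (v S)
    set T : ℝ := rv (v ((S:ℝ) : OnePoint ℝ)) with hTdef
    have hT_ub : T ≤ K * (1+K)^n := by
      have h1 : T ≤ t (n:ℤ) := by
        apply hmono
        rw [zpow_natCast]
        exact hS_le
      have h2 := hup n
      nlinarith [ht0K.1]
    have hT_lb : 1/(K * (1+K)^n) ≤ T := by
      have h1 : t (-(n:ℤ)) ≤ T := hmono _ _ hS_ge
      have h2 := hdown n
      have h3 := ht0K.2
      rw [div_le_iff₀ hK'pos]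
      have hKK : K * (1/K) = 1 := by field_simp
      nlinarith [htpos (-(n:ℤ))]
    have hTpos : 0 < T := lt_of_lt_of_le (by positivity) hT_lb
    -- conclusion
    have hvS : v ((S:ℝ) : OnePoint ℝ) = h (u c) := by
      have hx := hvg c
      rw [hgc] at hx
      exact hx
    have hhuc : h (u c) = ((T:ℝ) : OnePoint ℝ) := by
      rw [← hvS, hTdef]
      exact (coe_rv (hreal S)).symm
    have hDu : Distinct4 (u a) (u b) (u c) (u d) := distinct4_map huinj hdist
    have efin := crossRatio_mob hhd hDu
    rw [← hh] at efin
    rw [← efin, hha, hhb, hhuc, hhdd, crossRatio_cci,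
      show (-1 - 0 : ℝ) = -1 by ring, sub_zero, neg_div, neg_div]
    constructor
    · exact neg_le_neg ((one_div_le hTpos hK'pos).2 hT_lb)
    · exact neg_le_neg (one_div_le_one_div_of_le hTpos hT_ub)
  exact ⟨main, fun F _ => ⟨fun a _ b _ c _ hB => hu a b c hB,
    fun a _ b _ c _ d _ hd hcr => main a b c d hd hcr⟩⟩


end
end

section
/- Let K > 1 and let u : ℝP¹ → ℝP¹ be an increasing map (weakly preserving the standard cyclic order) with u(−1) = −1, u(0) = 0 and u(∞) = ∞. Assume that for every 4-tuple (a,b,c,d) of pairwise distinct points in symmetric position, the images u(a), u(b), u(c), u(d) are pairwise distinct and cr(u(a),u(b),u(c),u(d)) ∈ [−K, −1/K]. Then u is a homeomorphism of ℝP¹. -/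
/- ℝP¹ = ℝ ∪ {∞} (one-point compactification), cross-ratio, cyclic order,
   discrete quasi-symmetric maps. -/

noncomputable section
open Set

/-! ### Auxiliary lemmas -/

lemma rv_coe (x : ℝ) : rv (x : OnePoint ℝ) = x := rfl

lemma crossRatio_coe (a b c d : ℝ) :
    crossRatio ↑a ↑b ↑c ↑d = ((a - b) * (c - d)) / ((a - d) * (c - b)) := by
  simp [crossRatio, OnePoint.coe_ne_infty, rv_coe]

lemma crossRatio_infty₁ (b c d : ℝ) :
    crossRatio OnePoint.infty ↑b ↑c ↑d = (c - d) / (c - b) := by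
  simp [crossRatio, rv_coe]

lemma crossRatio_infty₂ (a c d : ℝ) :
    crossRatio ↑a OnePoint.infty ↑c ↑d = (c - d) / (a - d) := by
  simp [crossRatio, OnePoint.coe_ne_infty, rv_coe]

lemma crossRatio_infty₄ (a b c : ℝ) :
    crossRatio ↑a ↑b ↑c OnePoint.infty = (a - b) / (c - b) := by
  simp [crossRatio, OnePoint.coe_ne_infty, rv_coe]

lemma distinct4_coe {a b c d : ℝ} (h1 : a ≠ b) (h2 : a ≠ c) (h3 : a ≠ d)
    (h4 : b ≠ c) (h5 : b ≠ d) (h6 : c ≠ d) :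
    Distinct4 ↑a ↑b ↑c ↑d := by
  simp only [Distinct4, ne_eq, OnePoint.coe_eq_coe]
  exact ⟨h1, h2, h3, h4, h5, h6⟩

lemma distinct4_infty₁ {b c d : ℝ} (h4 : b ≠ c) (h5 : b ≠ d) (h6 : c ≠ d) :
    Distinct4 OnePoint.infty ↑b ↑c ↑d := by
  simp only [Distinct4, ne_eq, OnePoint.coe_eq_coe, OnePoint.infty_ne_coe,
    not_false_eq_true, true_and]
  exact ⟨h4, h5, h6⟩

lemma distinct4_infty₂ {a c d : ℝ} (h2 : a ≠ c) (h3 : a ≠ d) (h6 : c ≠ d) :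
    Distinct4 ↑a OnePoint.infty ↑c ↑d := by
  simp only [Distinct4, ne_eq, OnePoint.coe_eq_coe, OnePoint.infty_ne_coe,
    OnePoint.coe_ne_infty, not_false_eq_true, true_and, and_true]
  exact ⟨h2, h3, h6⟩

lemma distinct4_infty₄ {a b c : ℝ} (h1 : a ≠ b) (h2 : a ≠ c) (h4 : b ≠ c) :
    Distinct4 ↑a ↑b ↑c OnePoint.infty := by
  simp only [Distinct4, ne_eq, OnePoint.coe_eq_coe, OnePoint.infty_ne_coe,
    OnePoint.coe_ne_infty, not_false_eq_true, true_and, and_true]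
  exact ⟨h1, h2, h4⟩
set_option maxHeartbeats 1000000
/-- An increasing map `u : ℝP¹ → ℝP¹` fixing `−1, 0, ∞` that sends
every symmetric 4-tuple to a 4-tuple of pairwise distinct points with cross-ratio in
`[−K, −1/K]` is a homeomorphism of `ℝP¹`. -/
theorem increasing_qs_is_homeomorphism
    (K : ℝ) (hK : 1 < K) (u : OnePoint ℝ → OnePoint ℝ) (hmono : CyclicMono u)
    (hfix₁ : u ((-1 : ℝ) : OnePoint ℝ) = ((-1 : ℝ) : OnePoint ℝ))
    (hfix₂ : u ((0 : ℝ) : OnePoint ℝ) = ((0 : ℝ) : OnePoint ℝ))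
    (hfix₃ : u OnePoint.infty = OnePoint.infty)
    (hcr : ∀ a b c d : OnePoint ℝ, Distinct4 a b c d → crossRatio a b c d = -1 →
      Distinct4 (u a) (u b) (u c) (u d) ∧
      crossRatio (u a) (u b) (u c) (u d) ∈ Set.Icc (-K) (-1 / K)) :
    IsHomeomorph u := by
  have hK0 : (0:ℝ) < K := lt_trans one_pos hK
  -- u is injective
  have hne : ∀ a b : OnePoint ℝ, a ≠ b → u a ≠ u b := by
    intro a b hab
    induction a using OnePoint.rec with
    | infty =>
      induction b using OnePoint.rec with
      | infty => exact absurd rfl hab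
      | coe y =>
        have hd : Distinct4 OnePoint.infty ↑y ↑(y+1) ↑(y+2) :=
          distinct4_infty₁ (by norm_num) (by norm_num) (by norm_num)
        have hc : crossRatio OnePoint.infty ↑y ↑(y+1) ↑(y+2) = -1 := by
          rw [crossRatio_infty₁]; norm_num
        exact ((hcr _ _ _ _ hd hc).1).1
    | coe x =>
      induction b using OnePoint.rec with
      | infty =>
        have hd : Distinct4 ↑x OnePoint.infty ↑(x+2) ↑(x+1) :=
          distinct4_infty₂ (by norm_num) (by norm_num) (by norm_num)
        have hc : crossRatio ↑x OnePoint.infty ↑(x+2) ↑(x+1) = -1 := by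
          rw [crossRatio_infty₂]; norm_num
        exact ((hcr _ _ _ _ hd hc).1).1
      | coe y =>
        have hxy : x ≠ y := fun h => hab (by rw [h])
        have hd : Distinct4 ↑x ↑y ↑(2*y - x) OnePoint.infty :=
          distinct4_infty₄ hxy (fun h => hxy (by linarith)) (fun h => hxy (by linarith))
        have hc : crossRatio ↑x ↑y ↑(2*y - x) OnePoint.infty = -1 := by
          rw [crossRatio_infty₄, div_eq_iff (by intro h0; exact hxy (by linarith))]
          ring
        exact ((hcr _ _ _ _ hd hc).1).1
  have hinj : Function.Injective u := fun a b h => by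
    by_contra hab; exact hne a b hab h
  -- the real restriction f
  set f : ℝ → ℝ := fun x => rv (u ↑x) with hfdef
  have hco : ∀ x : ℝ, u ↑x = ↑(f x) := by
    intro x
    have h1 : u ↑x ≠ OnePoint.infty := by
      rw [← hfix₃]; exact hne _ _ (OnePoint.coe_ne_infty x)
    obtain ⟨y, hy⟩ := Option.ne_none_iff_exists'.mp h1
    have hrv : f x = y := by simp only [hfdef]; rw [hy]; rfl
    rw [hy, hrv]; rfl
  have hf0 : f 0 = 0 := by simp only [hfdef]; rw [hfix₂]; rfl
  have hfm1 : f (-1) = -1 := by simp only [hfdef]; rw [hfix₁]; rfl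
  -- monotone
  have hmle : Monotone f := by
    intro a b hab
    have hb : CBtw ↑a ↑b OnePoint.infty := by
      exact Set.mem_union_left _ (Set.mem_union_right _ ⟨a, b, rfl, rfl, rfl, hab⟩)
    have h := hmono _ _ _ hb
    rw [hco a, hco b, hfix₃] at h
    simp only [CBtw, arcCcw, Set.mem_union, Set.mem_setOf_eq] at h
    rcases h with ((⟨p,q,r,h1,h2,h3,h4⟩ | ⟨h1,h2⟩) | ⟨p,q,h1,h2,h3,h4⟩) | ⟨p,q,h1,h2,h3,h4⟩
    · exact absurd h2.symm (OnePoint.coe_ne_infty q)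
    · exact absurd h1 (OnePoint.coe_ne_infty _)
    · have e1 : f a = p := OnePoint.coe_injective h1
      have e2 : f b = q := OnePoint.coe_injective h3
      rw [e1, e2]; exact h4
    · exact absurd h1 (OnePoint.coe_ne_infty _)
  have hfinj : Function.Injective f := by
    intro p q h
    have : u ↑p = u ↑q := by rw [hco p, hco q, h]
    exact OnePoint.coe_injective (hinj this)
  have hsm : StrictMono f := hmle.strictMono_of_injective hfinj
  -- key inequality for finite increasing symmetric 4-tuples
  have key : ∀ a b c d : ℝ, a < b → b < c → c < d →
      ((a-b)*(c-d))/((a-d)*(c-b)) = -1 →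
      (f d - f a) * (f c - f b) ≤ K * ((f b - f a) * (f d - f c)) := by
    intro a b c d hab hbc hcd hcrv
    have hd4 : Distinct4 ↑a ↑b ↑c ↑d :=
      distinct4_coe hab.ne (hab.trans hbc).ne ((hab.trans hbc).trans hcd).ne
        hbc.ne (hbc.trans hcd).ne hcd.ne
    have hmem := (hcr _ _ _ _ hd4 (by rw [crossRatio_coe]; exact hcrv)).2
    rw [hco a, hco b, hco c, hco d, crossRatio_coe] at hmem
    have h1 : f a < f b := hsm hab
    have h2 : f b < f c := hsm hbc
    have h3 : f c < f d := hsm hcd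
    have hden : (f a - f d) * (f c - f b) < 0 :=
      mul_neg_of_neg_of_pos (by linarith) (by linarith)
    have hub := hmem.2
    rw [div_le_iff_of_neg hden] at hub
    have hKne : K ≠ 0 := ne_of_gt hK0
    calc (f d - f a) * (f c - f b)
        = K * (-1/K * ((f a - f d) * (f c - f b))) := by field_simp; ring
      _ ≤ K * ((f a - f b) * (f c - f d)) := mul_le_mul_of_nonneg_left hub hK0.le
      _ = K * ((f b - f a) * (f d - f c)) := by ring
  -- growth at +infinity
  have hf1 : 0 < f 1 := by
    have := hsm (show (0:ℝ) < 1 by norm_num); rw [hf0] at this; exact this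
  have hr : 1 < (K+1)/K := by rw [lt_div_iff₀ hK0]; linarith
  have hr0 : (0:ℝ) < (K+1)/K := lt_trans one_pos hr
  have grow : ∀ t : ℝ, 1 ≤ t → ((K+1)/K) * f t ≤ f (3*t) := by
    intro t ht
    have ht0 : (0:ℝ) < t := lt_of_lt_of_le one_pos ht
    have hd4 : Distinct4 ↑(-t) OnePoint.infty ↑(3*t) ↑t :=
      distinct4_infty₂ (by intro h; nlinarith) (by intro h; nlinarith)
        (by intro h; nlinarith)
    have hc : crossRatio ↑(-t) OnePoint.infty ↑(3*t) ↑t = -1 := by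
      rw [crossRatio_infty₂, div_eq_iff (by intro h0; nlinarith : -t - t ≠ 0)]; ring
    have hmem := (hcr _ _ _ _ hd4 hc).2
    rw [hco, hco, hco, hfix₃, crossRatio_infty₂] at hmem
    have h1 : f (-t) < f t := hsm (by linarith)
    have h2 : f t < f (3*t) := hsm (by linarith)
    have hfmt : f (-t) ≤ -1 := by
      have := hmle (show -t ≤ -1 by linarith); rw [hfm1] at this; exact this
    have hft : 0 < f t := lt_of_lt_of_le hf1 (hmle ht)
    have hden : f (-t) - f t < 0 := by linarith
    have hub := hmem.2
    rw [div_le_iff_of_neg hden] at hub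
    have hub2 : f t - f (-t) ≤ K * (f (3*t) - f t) := by
      calc f t - f (-t) = K * (-1/K * (f (-t) - f t)) := by field_simp; ring
        _ ≤ K * (f (3*t) - f t) := mul_le_mul_of_nonneg_left hub hK0.le
    rw [div_mul_eq_mul_div, div_le_iff₀ hK0]
    nlinarith [hub2, hfmt, hft]
  have pow_up : ∀ n : ℕ, ((K+1)/K)^n * f 1 ≤ f (3^n) := by
    intro n
    induction n with
    | zero => simp
    | succ k ih =>
      have h1 : (1:ℝ) ≤ 3^k := one_le_pow₀ (by norm_num)
      have := grow (3^k) h1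
      calc ((K+1)/K)^(k+1) * f 1 = ((K+1)/K) * (((K+1)/K)^k * f 1) := by ring
        _ ≤ ((K+1)/K) * f (3^k) := mul_le_mul_of_nonneg_left ih hr0.le
        _ ≤ f (3*3^k) := this
        _ = f (3^(k+1)) := by rw [pow_succ]; ring_nf
  have above : ∀ M : ℝ, ∃ x : ℝ, M < f x := by
    intro M
    obtain ⟨n, hn⟩ := pow_unbounded_of_one_lt (M / f 1) hr
    refine ⟨3^n, ?_⟩
    have := (div_lt_iff₀ hf1).mp hn
    exact lt_of_lt_of_le this (pow_up n)
  -- decay at -infinity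
  have shrink : ∀ t : ℝ, 1 ≤ t → f (-(3*t)) ≤ ((K+1)/K) * f (-t) := by
    intro t ht
    have ht0 : (0:ℝ) < t := lt_of_lt_of_le one_pos ht
    have hd4 : Distinct4 ↑t OnePoint.infty ↑(-(3*t)) ↑(-t) :=
      distinct4_infty₂ (by intro h; nlinarith) (by intro h; nlinarith)
        (by intro h; nlinarith)
    have hc : crossRatio ↑t OnePoint.infty ↑(-(3*t)) ↑(-t) = -1 := by
      rw [crossRatio_infty₂, div_eq_iff (by intro h0; nlinarith : t - -t ≠ 0)]; ring
    have hmem := (hcr _ _ _ _ hd4 hc).2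
    rw [hco, hco, hco, hfix₃, crossRatio_infty₂] at hmem
    have h1 : f (-(3*t)) < f (-t) := hsm (by linarith)
    have h2 : f (-t) < f t := hsm (by linarith)
    have hft : 0 < f t := lt_of_lt_of_le hf1 (hmle ht)
    have hden : 0 < f t - f (-t) := by linarith
    have hub := hmem.2
    rw [div_le_iff₀ hden] at hub
    have hub2 : K * (f (-(3*t)) - f (-t)) ≤ f (-t) - f t := by
      calc K * (f (-(3*t)) - f (-t)) ≤ K * (-1/K * (f t - f (-t))) :=
            mul_le_mul_of_nonneg_left hub hK0.le
        _ = f (-t) - f t := by field_simp; ring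
    rw [div_mul_eq_mul_div, le_div_iff₀ hK0]
    nlinarith [hub2, hft]
  have pow_dn : ∀ n : ℕ, f (-(3^n)) ≤ ((K+1)/K)^n * (-1) := by
    intro n
    induction n with
    | zero => simp [hfm1]
    | succ k ih =>
      have h1 : (1:ℝ) ≤ 3^k := one_le_pow₀ (by norm_num)
      have hstep := shrink (3^k) h1
      have : (-(3*3^k) : ℝ) = -(3^(k+1)) := by rw [pow_succ]; ring
      rw [this] at hstep
      calc f (-(3^(k+1))) ≤ ((K+1)/K) * f (-(3^k)) := hstep
        _ ≤ ((K+1)/K) * (((K+1)/K)^k * (-1)) := mul_le_mul_of_nonneg_left ih hr0.le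
        _ = ((K+1)/K)^(k+1) * (-1) := by ring
  have below : ∀ M : ℝ, ∃ x : ℝ, f x < M := by
    intro M
    obtain ⟨n, hn⟩ := pow_unbounded_of_one_lt (-M) hr
    refine ⟨-(3^n), lt_of_le_of_lt (pow_dn n) ?_⟩
    linarith
  -- no jump to the right
  have nojumpR : ∀ x δ : ℝ, 0 < δ → ∃ t, 0 < t ∧ f (x+t) < f x + δ := by
    intro x δ hδ
    by_contra hcon
    push_neg at hcon
    have hM1 : 0 < f x - f (x-1) := by have := hsm (show x-1 < x by linarith); linarith
    set M₁ := f x - f (x-1) with hM1def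
    set c := δ^2 / (K * M₁) with hcdef
    have hc0 : 0 < c := div_pos (by positivity) (mul_pos hK0 hM1)
    have step : ∀ t : ℝ, 0 < t → t ≤ 1 → f (x + t/3) + c ≤ f (x + t) := by
      intro t ht ht1
      have hcrv : (((x-t)-x)*((x+t/3)-(x+t)))/(((x-t)-(x+t))*((x+t/3)-x)) = -1 := by
        rw [div_eq_iff (mul_ne_zero (by intro h0; linarith : (x-t)-(x+t) ≠ 0)
          (by intro h0; linarith : (x+t/3)-x ≠ 0))]
        ring
      have happ := key (x-t) x (x+t/3) (x+t) (by linarith) (by linarith) (by linarith) hcrv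
      have hA : f (x-1) ≤ f (x-t) := hmle (by linarith)
      have hlt : f (x-t) < f x := hsm (by linarith)
      have hC : f x + δ ≤ f (x+t/3) := hcon (t/3) (by linarith)
      have hD : f x + δ ≤ f (x+t) := hcon t ht
      have hCD : f (x+t/3) ≤ f (x+t) := hmle (by linarith)
      suffices h : c ≤ f (x+t) - f (x+t/3) by linarith
      rw [hcdef, div_le_iff₀ (mul_pos hK0 hM1)]
      have h6 : δ*δ ≤ (f (x+t) - f (x-t)) * (f (x+t/3) - f x) :=
        mul_le_mul (by linarith) (by linarith) hδ.le (by linarith)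
      have h7 : K * ((f x - f (x-t)) * (f (x+t) - f (x+t/3))) ≤
          K * (M₁ * (f (x+t) - f (x+t/3))) := by
        apply mul_le_mul_of_nonneg_left _ hK0.le
        apply mul_le_mul_of_nonneg_right _ (by linarith)
        rw [hM1def]; linarith
      nlinarith [h6, happ, h7]
    have iter : ∀ n : ℕ, f (x + (1/3:ℝ)^n) + n * c ≤ f (x + 1) := by
      intro n
      induction n with
      | zero => simp
      | succ k ih =>
        have hp : (0:ℝ) < (1/3:ℝ)^k := by positivity
        have hp1 : ((1/3:ℝ))^k ≤ 1 := pow_le_one₀ (by norm_num) (by norm_num)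
        have hstep := step ((1/3)^k) hp hp1
        have heq : x + (1/3:ℝ)^k/3 = x + (1/3:ℝ)^(k+1) := by rw [pow_succ]; ring
        rw [heq] at hstep
        push_cast
        linarith
    obtain ⟨n, hn⟩ := exists_nat_gt ((f (x+1) - f x - δ)/c)
    have h8 : f x + δ ≤ f (x + (1/3:ℝ)^n) := hcon ((1/3)^n) (by positivity)
    have h9 := iter n
    have h10 : f (x+1) - f x - δ < n * c := (div_lt_iff₀ hc0).mp hn
    linarith
  -- no jump to the left
  have nojumpL : ∀ x δ : ℝ, 0 < δ → ∃ t, 0 < t ∧ f x - δ < f (x - t) := by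
    intro x δ hδ
    by_contra hcon
    push_neg at hcon
    have hM1 : 0 < f (x+1) - f x := by have := hsm (show x < x+1 by linarith); linarith
    set M₁ := f (x+1) - f x with hM1def
    set c := δ^2 / (K * M₁) with hcdef
    have hc0 : 0 < c := div_pos (by positivity) (mul_pos hK0 hM1)
    have step : ∀ t : ℝ, 0 < t → t ≤ 1 → f (x - t) + c ≤ f (x - t/3) := by
      intro t ht ht1
      have hcrv : (((x-t)-(x-t/3))*(x-(x+t)))/(((x-t)-(x+t))*(x-(x-t/3))) = -1 := by
        rw [div_eq_iff (mul_ne_zero (by intro h0; linarith : (x-t)-(x+t) ≠ 0)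
          (by intro h0; linarith : x-(x-t/3) ≠ 0))]
        ring
      have happ := key (x-t) (x-t/3) x (x+t) (by linarith) (by linarith) (by linarith) hcrv
      have hDm : f (x+t) ≤ f (x+1) := hmle (by linarith)
      have hgt : f x < f (x+t) := hsm (by linarith)
      have hB : f (x-t/3) ≤ f x - δ := hcon (t/3) (by linarith)
      have hA : f (x-t) ≤ f x - δ := hcon t ht
      have hAB : f (x-t) ≤ f (x-t/3) := hmle (by linarith)
      suffices h : c ≤ f (x-t/3) - f (x-t) by linarith
      rw [hcdef, div_le_iff₀ (mul_pos hK0 hM1)]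
      have h6 : δ*δ ≤ (f (x+t) - f (x-t)) * (f x - f (x-t/3)) :=
        mul_le_mul (by linarith) (by linarith) hδ.le (by linarith)
      have h7 : K * ((f (x-t/3) - f (x-t)) * (f (x+t) - f x)) ≤
          K * ((f (x-t/3) - f (x-t)) * M₁) := by
        apply mul_le_mul_of_nonneg_left _ hK0.le
        apply mul_le_mul_of_nonneg_left _ (by linarith)
        rw [hM1def]; linarith
      nlinarith [h6, happ, h7]
    have iter : ∀ n : ℕ, f (x - 1) + n * c ≤ f (x - (1/3:ℝ)^n) := by
      intro n
      induction n with
      | zero => simp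
      | succ k ih =>
        have hp : (0:ℝ) < (1/3:ℝ)^k := by positivity
        have hp1 : ((1/3:ℝ))^k ≤ 1 := pow_le_one₀ (by norm_num) (by norm_num)
        have hstep := step ((1/3)^k) hp hp1
        have heq : x - (1/3:ℝ)^k/3 = x - (1/3:ℝ)^(k+1) := by rw [pow_succ]; ring
        rw [heq] at hstep
        push_cast
        linarith
    obtain ⟨n, hn⟩ := exists_nat_gt ((f x - δ - f (x-1))/c)
    have h8 : f (x - (1/3:ℝ)^n) ≤ f x - δ := hcon ((1/3)^n) (by positivity)
    have h9 := iter n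
    have h10 : f x - δ - f (x-1) < n * c := (div_lt_iff₀ hc0).mp hn
    linarith
  -- surjectivity of f
  have hsurj : Function.Surjective f := by
    intro y
    obtain ⟨alo, halo⟩ := below y
    obtain ⟨ahi, hahi⟩ := above y
    set S := {t : ℝ | f t ≤ y} with hSdef
    have hSne : S.Nonempty := ⟨alo, halo.le⟩
    have hSbdd : BddAbove S := by
      refine ⟨ahi, fun s hs => ?_⟩
      by_contra hlt
      push_neg at hlt
      have := hmle hlt.le
      have hsy : f s ≤ y := hs
      linarith
    set x := sSup S with hxdef
    rcases lt_trichotomy (f x) y with hlt | heq | hgt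
    · obtain ⟨t, ht, hft⟩ := nojumpR x (y - f x) (by linarith)
      have hmem : x + t ∈ S := by
        have hyy : f (x + t) ≤ y := by linarith
        exact hyy
      have := le_csSup hSbdd hmem
      linarith
    · exact ⟨x, heq⟩
    · obtain ⟨t, ht, hft⟩ := nojumpL x (f x - y) (by linarith)
      have hub : ∀ s ∈ S, s ≤ x - t := by
        intro s hs
        by_contra hgt2
        push_neg at hgt2
        have h1 := hmle hgt2.le
        have hsy : f s ≤ y := hs
        linarith
      have := csSup_le hSne hub
      linarith
  -- conclude
  let e := StrictMono.orderIsoOfSurjective f hsm hsurj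
  rw [isHomeomorph_iff_exists_homeomorph]
  refine ⟨Homeomorph.onePointCongr e.toHomeomorph, ?_⟩
  funext z
  induction z using OnePoint.rec with
  | infty => simp [hfix₃]
  | coe x =>
    rw [hco x]
    show OnePoint.map (⇑e.toHomeomorph) ↑x = ↑(f x)
    rw [OnePoint.map_some]
    congr 1

end
end
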